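/- arXiv:2102.10333 — 5 statements merged into one kernel-verified Lean document; each statement's English description precedes it below -/
import Mathlib

section
/- Let U be any subspace of V that is closed under the averaging operator 𝒬. Define S = {f ∈ U : f is 𝒢-equivariant, i.e. f(gx) = ψ(g)f(x) for all g ∈ 𝒢, x ∈ 𝒳} and A = {f ∈ U : 𝒬f = 0}. Then U admits an orthogonal decomposition U = S ⊕ A with respect to ⟨·,·⟩_μ: every u ∈ U can be written uniquely (μ-a.e.) as u = s + a with s ∈ S, a ∈ A and ⟨s, a⟩_μ = 0. -/
open MeasureTheory
open scoped RealInnerProductSpace ENNReal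

/-- The equivariant averaging operator `𝒬`:
`(𝒬 f)(x) = ∫_𝒢 ψ(g⁻¹) f(g • x) dλ(g)`. -/
noncomputable def Qavg {G X : Type*} [Group G] [MeasurableSpace G] [MulAction G X] {k : ℕ}
    (lam : Measure G)
    (ψ : G →* (EuclideanSpace ℝ (Fin k) ≃ₗᵢ[ℝ] EuclideanSpace ℝ (Fin k)))
    (f : X → EuclideanSpace ℝ (Fin k)) : X → EuclideanSpace ℝ (Fin k) :=
  fun x => ∫ g, ψ g⁻¹ (f (g • x)) ∂lam

section Helpers
set_option linter.unusedSectionVars false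
variable {G X : Type*} [Group G] [MeasurableSpace G] [MeasurableSpace X] [MulAction G X] {k : ℕ}
variable (ψ : G →* (EuclideanSpace ℝ (Fin k) ≃ₗᵢ[ℝ] EuclideanSpace ℝ (Fin k)))

lemma psi_inv_apply (g : G) (y : EuclideanSpace ℝ (Fin k)) : ψ g⁻¹ (ψ g y) = y := by
  rw [map_inv, LinearIsometryEquiv.inv_def]; exact (ψ g).symm_apply_apply y

lemma psi_apply_inv (g : G) (y : EuclideanSpace ℝ (Fin k)) : ψ g (ψ g⁻¹ y) = y := by
  rw [map_inv, LinearIsometryEquiv.inv_def]; exact (ψ g).apply_symm_apply y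

lemma psi_mul_apply (g h : G) (y : EuclideanSpace ℝ (Fin k)) : ψ (g * h) y = ψ g (ψ h y) := by
  rw [map_mul]; rfl

lemma inner_psi_inv (g : G) (v y : EuclideanSpace ℝ (Fin k)) :
    ⟪v, ψ g⁻¹ y⟫ = ⟪ψ g v, y⟫ := by
  conv_rhs => rw [← psi_apply_inv ψ g y]
  exact ((ψ g).inner_map_map v (ψ g⁻¹ y)).symm

lemma measurable_psi_inv (hψ : Measurable fun p : G × EuclideanSpace ℝ (Fin k) => ψ p.1 p.2) :
    Measurable fun p : G × EuclideanSpace ℝ (Fin k) => ψ p.1⁻¹ p.2 := by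
  have key : ∀ p : G × EuclideanSpace ℝ (Fin k),
      ψ p.1⁻¹ p.2 = ∑ i : Fin k, ⟪p.2, ψ p.1 ((EuclideanSpace.basisFun (Fin k) ℝ) i)⟫ •
        (EuclideanSpace.basisFun (Fin k) ℝ) i := by
    intro p
    conv_lhs => rw [← (EuclideanSpace.basisFun (Fin k) ℝ).sum_repr (ψ p.1⁻¹ p.2)]
    refine Finset.sum_congr rfl fun i _ => ?_
    congr 1
    rw [OrthonormalBasis.repr_apply_apply, inner_psi_inv, real_inner_comm]
  simp_rw [key]
  refine Finset.measurable_sum _ fun i _ => Measurable.smul_const ?_ _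
  exact Measurable.inner measurable_snd ((hψ.comp (measurable_fst.prodMk measurable_const)))

lemma aemeasurable_mul_right (lam : Measure G) [IsProbabilityMeasure lam]
    (hrinv : ∀ g : G, lam.map (fun h => h * g) = lam) (g : G) :
    AEMeasurable (fun h => h * g) lam := by
  by_contra h
  have := hrinv g
  rw [Measure.map_of_not_aemeasurable h] at this
  exact (IsProbabilityMeasure.ne_zero lam) this.symm

lemma qavg_equivariant (lam : Measure G) [IsProbabilityMeasure lam]
    (hrinv : ∀ g : G, lam.map (fun h => h * g) = lam)
    (f : X → EuclideanSpace ℝ (Fin k)) (g : G) (x : X) :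
    Qavg lam ψ f (g • x) = ψ g (Qavg lam ψ f x) := by
  set F : G → EuclideanSpace ℝ (Fin k) := fun h => ψ h⁻¹ (f (h • (g • x))) with hF
  set F' : G → EuclideanSpace ℝ (Fin k) := fun h => ψ h⁻¹ (f (h • x)) with hF'
  have hcomp : ∀ h : G, F (h * g⁻¹) = ψ g (F' h) := by
    intro h
    simp only [hF, hF']
    rw [smul_smul, inv_mul_cancel_right, mul_inv_rev, inv_inv, psi_mul_apply]
  by_cases hm : AEStronglyMeasurable F' lam
  · have h1 : AEStronglyMeasurable (fun h => F (h * g⁻¹)) lam := by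
      have h0 := ((ψ g).continuous.comp_aestronglyMeasurable hm)
      have : (fun h => F (h * g⁻¹)) = fun h => ψ g (F' h) := funext hcomp
      rw [this]; exact h0
    have h2 : AEStronglyMeasurable F lam := by
      have h3 : AEStronglyMeasurable (fun h => F (h * g⁻¹)) (lam.map (fun h => h * g)) := by
        rwa [hrinv g]
      have := h3.comp_aemeasurable (aemeasurable_mul_right lam hrinv g)
      simpa [Function.comp_def] using this
    calc Qavg lam ψ f (g • x) = ∫ h, F h ∂lam := rfl
      _ = ∫ h, F h ∂(lam.map (fun h => h * g⁻¹)) := by rw [hrinv g⁻¹]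
      _ = ∫ h, F (h * g⁻¹) ∂lam :=
          integral_map (aemeasurable_mul_right lam hrinv g⁻¹) (by rwa [hrinv g⁻¹])
      _ = ∫ h, ψ g (F' h) ∂lam := by simp_rw [hcomp]
      _ = ψ g (∫ h, F' h ∂lam) := (ψ g).toLinearIsometry.integral_comp_comm F'
  · have h2 : ¬ AEStronglyMeasurable F lam := by
      intro hFm
      apply hm
      have h3 : AEStronglyMeasurable F (lam.map (fun h => h * g⁻¹)) := by rwa [hrinv g⁻¹]
      have h4 := h3.comp_aemeasurable (aemeasurable_mul_right lam hrinv g⁻¹)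
      have h5 : AEStronglyMeasurable (fun h => ψ g (F' h)) lam := by
        have : (fun h => ψ g (F' h)) = F ∘ (fun h => h * g⁻¹) := (funext hcomp).symm
        rw [this]; exact h4
      have h6 := (ψ g⁻¹).continuous.comp_aestronglyMeasurable h5
      simpa [psi_inv_apply] using h6
    show ∫ h, F h ∂lam = ψ g (∫ h, F' h ∂lam)
    rw [integral_non_aestronglyMeasurable h2, integral_non_aestronglyMeasurable hm, map_zero]

lemma smul_measurable (hact : Measurable fun p : G × X => p.1 • p.2) (g : G) :
    Measurable fun x : X => g • x := hact.comp (measurable_const.prodMk measurable_id)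

lemma lintegral_smul_invariant (hact : Measurable fun p : G × X => p.1 • p.2)
    (μ : Measure X) (hμinv : ∀ g : G, μ.map (fun x => g • x) = μ)
    {h : X → ℝ≥0∞} (hh : Measurable h) (g : G) :
    ∫⁻ x, h (g • x) ∂μ = ∫⁻ x, h x ∂μ := by
  conv_rhs => rw [← hμinv g]
  rw [lintegral_map hh (smul_measurable hact g)]

lemma ae_ae_smul_nmem (lam : Measure G) [IsProbabilityMeasure lam]
    (hact : Measurable fun p : G × X => p.1 • p.2)
    (μ : Measure X) [SigmaFinite μ] (hμinv : ∀ g : G, μ.map (fun x => g • x) = μ)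
    {N : Set X} (hN : MeasurableSet N) (hN0 : μ N = 0) :
    ∀ᵐ x ∂μ, ∀ᵐ g ∂lam, g • x ∉ N := by
  have hswap : Measurable fun p : X × G => p.2 • p.1 :=
    hact.comp (measurable_snd.prodMk measurable_fst)
  have hind : Measurable fun p : X × G => N.indicator (fun _ => (1:ℝ≥0∞)) (p.2 • p.1) :=
    (measurable_one.indicator hN).comp hswap
  have key : ∫⁻ x, ∫⁻ g, N.indicator (fun _ => (1:ℝ≥0∞)) (g • x) ∂lam ∂μ = 0 := by
    rw [lintegral_lintegral_swap hind.aemeasurable]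
    have inner0 : ∀ g : G, ∫⁻ x, N.indicator (fun _ => (1:ℝ≥0∞)) (g • x) ∂μ = 0 := by
      intro g
      calc ∫⁻ x, N.indicator (fun _ => (1:ℝ≥0∞)) (g • x) ∂μ
          = ∫⁻ x, N.indicator (fun _ => (1:ℝ≥0∞)) x ∂μ :=
            lintegral_smul_invariant hact μ hμinv (measurable_one.indicator hN) g
        _ = μ N := lintegral_indicator_one hN
        _ = 0 := hN0
    simp [inner0]
  have hmeasH : Measurable fun x => ∫⁻ g, N.indicator (fun _ => (1:ℝ≥0∞)) (g • x) ∂lam :=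
    Measurable.lintegral_prod_right hind
  filter_upwards [(lintegral_eq_zero_iff hmeasH).mp key] with x hx
  have hxm : Measurable fun g : G => N.indicator (fun _ => (1:ℝ≥0∞)) (g • x) :=
    (measurable_one.indicator hN).comp (hact.comp (measurable_id.prodMk measurable_const))
  have hx' : ∀ᵐ g ∂lam, N.indicator (fun _ => (1:ℝ≥0∞)) (g • x) = 0 :=
    (lintegral_eq_zero_iff hxm).mp hx
  filter_upwards [hx'] with g hg hmem
  rw [Set.indicator_of_mem hmem] at hg
  exact one_ne_zero hg

lemma ae_ae_smul_eq (lam : Measure G) [IsProbabilityMeasure lam]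
    (hact : Measurable fun p : G × X => p.1 • p.2)
    (μ : Measure X) [SigmaFinite μ] (hμinv : ∀ g : G, μ.map (fun x => g • x) = μ)
    {f h : X → EuclideanSpace ℝ (Fin k)} (hfh : f =ᵐ[μ] h) :
    ∀ᵐ x ∂μ, ∀ᵐ g ∂lam, f (g • x) = h (g • x) := by
  obtain ⟨N, hsub, hN, hN0⟩ := exists_measurable_superset_of_null (ae_iff.mp hfh)
  filter_upwards [ae_ae_smul_nmem lam hact μ hμinv hN hN0] with x hx
  filter_upwards [hx] with g hg
  by_contra hne
  exact hg (hsub hne)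

lemma qavg_congr_ae (lam : Measure G) [IsProbabilityMeasure lam]
    (hact : Measurable fun p : G × X => p.1 • p.2)
    (μ : Measure X) [SigmaFinite μ] (hμinv : ∀ g : G, μ.map (fun x => g • x) = μ)
    {f h : X → EuclideanSpace ℝ (Fin k)} (hfh : f =ᵐ[μ] h) :
    Qavg lam ψ f =ᵐ[μ] Qavg lam ψ h := by
  filter_upwards [ae_ae_smul_eq lam hact μ hμinv hfh] with x hx
  exact integral_congr_ae (hx.mono fun g hg => by simp only [hg])

lemma lintegral_sq_lt_top {α : Type*} [MeasurableSpace α] {ν : Measure α}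
    {f : α → EuclideanSpace ℝ (Fin k)} (hf : MemLp f 2 ν) :
    ∫⁻ x, (‖f x‖₊ : ℝ≥0∞) ^ (2:ℝ) ∂ν < ∞ := by
  have h := hf.2
  rw [eLpNorm_eq_lintegral_rpow_enorm_toReal two_ne_zero ENNReal.ofNat_ne_top] at h
  have h2 : ((2:ℝ≥0∞)).toReal = (2:ℝ) := by simp
  rw [h2] at h
  exact (ENNReal.rpow_lt_top_iff_of_pos (by norm_num : (0:ℝ) < 1/2)).mp h

lemma memLp_two_of {α : Type*} [MeasurableSpace α] {ν : Measure α}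
    {f : α → EuclideanSpace ℝ (Fin k)} (hm : AEStronglyMeasurable f ν)
    (hint : ∫⁻ x, (‖f x‖₊ : ℝ≥0∞) ^ (2:ℝ) ∂ν < ∞) : MemLp f 2 ν := by
  refine ⟨hm, ?_⟩
  rw [eLpNorm_eq_lintegral_rpow_enorm_toReal two_ne_zero ENNReal.ofNat_ne_top]
  have h2 : ((2:ℝ≥0∞)).toReal = (2:ℝ) := by simp
  rw [h2]
  exact ENNReal.rpow_lt_top_of_nonneg (by norm_num) hint.ne

lemma ae_integrable_qavg (lam : Measure G) [IsProbabilityMeasure lam]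
    (hψ : Measurable fun p : G × EuclideanSpace ℝ (Fin k) => ψ p.1 p.2)
    (hact : Measurable fun p : G × X => p.1 • p.2)
    (μ : Measure X) [SigmaFinite μ] (hμinv : ∀ g : G, μ.map (fun x => g • x) = μ)
    {f : X → EuclideanSpace ℝ (Fin k)} (hfm : Measurable f) (hf2 : MemLp f 2 μ) :
    ∀ᵐ x ∂μ, Integrable (fun g => ψ g⁻¹ (f (g • x))) lam := by
  have hswap : Measurable fun p : X × G => f (p.2 • p.1) :=
    hfm.comp (hact.comp (measurable_snd.prodMk measurable_fst))
  have hjoint : Measurable fun p : X × G => (‖f (p.2 • p.1)‖₊ : ℝ≥0∞) ^ (2:ℝ) :=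
    (hswap.nnnorm.coe_nnreal_ennreal).pow_const _
  have key : ∫⁻ x, ∫⁻ g, (‖f (g • x)‖₊ : ℝ≥0∞) ^ (2:ℝ) ∂lam ∂μ < ∞ := by
    rw [lintegral_lintegral_swap hjoint.aemeasurable]
    have inner_eq : ∀ g : G, ∫⁻ x, (‖f (g • x)‖₊ : ℝ≥0∞) ^ (2:ℝ) ∂μ
        = ∫⁻ x, (‖f x‖₊ : ℝ≥0∞) ^ (2:ℝ) ∂μ :=
      fun g => lintegral_smul_invariant hact μ hμinv
        ((hfm.nnnorm.coe_nnreal_ennreal).pow_const _) g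
    simp_rw [inner_eq, lintegral_const]
    simpa using lintegral_sq_lt_top hf2
  have hH : Measurable fun x => ∫⁻ g, (‖f (g • x)‖₊ : ℝ≥0∞) ^ (2:ℝ) ∂lam :=
    Measurable.lintegral_prod_right' hjoint
  filter_upwards [ae_lt_top hH key.ne] with x hx
  have hmg : Measurable fun g => ψ g⁻¹ (f (g • x)) :=
    (measurable_psi_inv ψ hψ).comp
      (measurable_id.prodMk (hfm.comp (hact.comp (measurable_id.prodMk measurable_const))))
  have hmem : MemLp (fun g => ψ g⁻¹ (f (g • x))) 2 lam := by
    refine memLp_two_of hmg.aestronglyMeasurable ?_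
    simp_rw [LinearIsometryEquiv.nnnorm_map]
    exact hx
  exact hmem.integrable one_le_two

lemma stronglyMeasurable_qavg (lam : Measure G) [IsProbabilityMeasure lam]
    (hψ : Measurable fun p : G × EuclideanSpace ℝ (Fin k) => ψ p.1 p.2)
    (hact : Measurable fun p : G × X => p.1 • p.2)
    {f : X → EuclideanSpace ℝ (Fin k)} (hfm : Measurable f) :
    StronglyMeasurable (Qavg lam ψ f) := by
  have hjoint : StronglyMeasurable fun p : X × G => ψ p.2⁻¹ (f (p.2 • p.1)) := by
    apply Measurable.stronglyMeasurable
    exact (measurable_psi_inv ψ hψ).comp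
      (measurable_snd.prodMk (hfm.comp (hact.comp (measurable_snd.prodMk measurable_fst))))
  exact hjoint.integral_prod_right'

lemma ortho_key (lam : Measure G) [IsProbabilityMeasure lam]
    (hrinv : ∀ g : G, lam.map (fun h => h * g) = lam)
    (hψ : Measurable fun p : G × EuclideanSpace ℝ (Fin k) => ψ p.1 p.2)
    (hact : Measurable fun p : G × X => p.1 • p.2)
    (μ : Measure X) [SigmaFinite μ] (hμinv : ∀ g : G, μ.map (fun x => g • x) = μ)
    {s a : X → EuclideanSpace ℝ (Fin k)}
    (hsm : Measurable s) (hs2 : MemLp s 2 μ)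
    (hsequiv : ∀ (g : G) (x : X), s (g • x) = ψ g (s x))
    (ham : Measurable a) (ha2 : MemLp a 2 μ) :
    ∫ x, ⟪s x, a x⟫ ∂μ = ∫ x, ⟪s x, Qavg lam ψ a x⟫ ∂μ := by
  have hswap : Measurable fun p : X × G => a (p.2 • p.1) :=
    ham.comp (hact.comp (measurable_snd.prodMk measurable_fst))
  have hφm : Measurable fun p : X × G => ⟪s p.1, ψ p.2⁻¹ (a (p.2 • p.1))⟫ :=
    (hsm.comp measurable_fst).inner
      ((measurable_psi_inv ψ hψ).comp (measurable_snd.prodMk hswap))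
  set Ms : ℝ≥0∞ := ∫⁻ x, (‖s x‖₊ : ℝ≥0∞) ^ (2:ℝ) ∂μ with hMs
  set Ma : ℝ≥0∞ := ∫⁻ x, (‖a x‖₊ : ℝ≥0∞) ^ (2:ℝ) ∂μ with hMa
  have hInt : Integrable (Function.uncurry fun x g => ⟪s x, ψ g⁻¹ (a (g • x))⟫) (μ.prod lam) := by
    refine ⟨hφm.aestronglyMeasurable, ?_⟩
    rw [hasFiniteIntegral_def]
    have hbound : ∫⁻ p : X × G, (‖⟪s p.1, ψ p.2⁻¹ (a (p.2 • p.1))⟫‖₊ : ℝ≥0∞) ∂(μ.prod lam)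
        ≤ ∫⁻ p : X × G, (‖s p.1‖₊ : ℝ≥0∞) * (‖a (p.2 • p.1)‖₊ : ℝ≥0∞) ∂(μ.prod lam) := by
      refine lintegral_mono fun p => ?_
      calc (‖⟪s p.1, ψ p.2⁻¹ (a (p.2 • p.1))⟫‖₊ : ℝ≥0∞)
          ≤ (‖s p.1‖₊ : ℝ≥0∞) * (‖ψ p.2⁻¹ (a (p.2 • p.1))‖₊ : ℝ≥0∞) := by
            rw [← ENNReal.coe_mul]
            exact_mod_cast nnnorm_inner_le_nnnorm _ _
        _ = (‖s p.1‖₊ : ℝ≥0∞) * (‖a (p.2 • p.1)‖₊ : ℝ≥0∞) := by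
            rw [LinearIsometryEquiv.nnnorm_map]
    refine lt_of_le_of_lt hbound ?_
    have hprodm : Measurable fun p : X × G => (‖s p.1‖₊ : ℝ≥0∞) * (‖a (p.2 • p.1)‖₊ : ℝ≥0∞) :=
      ((hsm.comp measurable_fst).nnnorm.coe_nnreal_ennreal).mul
        (hswap.nnnorm.coe_nnreal_ennreal)
    rw [lintegral_prod _ hprodm.aemeasurable, lintegral_lintegral_swap hprodm.aemeasurable]
    have hinner : ∀ g : G, ∫⁻ x, (‖s x‖₊ : ℝ≥0∞) * (‖a (g • x)‖₊ : ℝ≥0∞) ∂μ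
        ≤ Ms ^ (1/2 : ℝ) * Ma ^ (1/2 : ℝ) := by
      intro g
      have hconj : Real.HolderConjugate 2 2 := Real.HolderConjugate.two_two
      have hH := ENNReal.lintegral_mul_le_Lp_mul_Lq μ hconj
        (hsm.nnnorm.coe_nnreal_ennreal).aemeasurable
        ((ham.comp (smul_measurable hact g)).nnnorm.coe_nnreal_ennreal).aemeasurable
      calc ∫⁻ x, (‖s x‖₊ : ℝ≥0∞) * (‖a (g • x)‖₊ : ℝ≥0∞) ∂μ
          ≤ (∫⁻ x, (‖s x‖₊ : ℝ≥0∞) ^ (2:ℝ) ∂μ) ^ (1/2 : ℝ) *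
            (∫⁻ x, (‖a (g • x)‖₊ : ℝ≥0∞) ^ (2:ℝ) ∂μ) ^ (1/2 : ℝ) := hH
        _ = Ms ^ (1/2 : ℝ) * Ma ^ (1/2 : ℝ) := by
            rw [hMs, hMa,
              lintegral_smul_invariant hact μ hμinv ((ham.nnnorm.coe_nnreal_ennreal).pow_const _) g]
    calc ∫⁻ g, ∫⁻ x, (‖s x‖₊ : ℝ≥0∞) * (‖a (g • x)‖₊ : ℝ≥0∞) ∂μ ∂lam
        ≤ ∫⁻ _, Ms ^ (1/2 : ℝ) * Ma ^ (1/2 : ℝ) ∂lam := lintegral_mono hinner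
      _ = Ms ^ (1/2 : ℝ) * Ma ^ (1/2 : ℝ) := by simp
      _ < ∞ := ENNReal.mul_lt_top
          (ENNReal.rpow_lt_top_of_nonneg (by norm_num) (lintegral_sq_lt_top hs2).ne)
          (ENNReal.rpow_lt_top_of_nonneg (by norm_num) (lintegral_sq_lt_top ha2).ne)
  calc ∫ x, ⟪s x, a x⟫ ∂μ
      = ∫ g, ∫ x, ⟪s x, a x⟫ ∂μ ∂lam := by simp
    _ = ∫ g, ∫ x, ⟪s x, ψ g⁻¹ (a (g • x))⟫ ∂μ ∂lam := by
        refine integral_congr_ae (Filter.Eventually.of_forall fun g => ?_)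
        have h1 : ∀ x, ⟪s x, ψ g⁻¹ (a (g • x))⟫ = (fun y => ⟪s y, a y⟫) (g • x) := by
          intro x
          rw [inner_psi_inv, ← hsequiv]
        simp_rw [h1]
        have hmi : AEStronglyMeasurable (fun y => ⟪s y, a y⟫) (μ.map (fun x => g • x)) := by
          rw [hμinv g]; exact (hsm.inner ham).aestronglyMeasurable
        rw [← integral_map (smul_measurable hact g).aemeasurable hmi, hμinv g]
    _ = ∫ x, ∫ g, ⟪s x, ψ g⁻¹ (a (g • x))⟫ ∂lam ∂μ := (integral_integral_swap hInt).symm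
    _ = ∫ x, ⟪s x, Qavg lam ψ a x⟫ ∂μ := by
        refine integral_congr_ae ?_
        filter_upwards [ae_integrable_qavg ψ lam hψ hact μ hμinv ham ha2] with x hx
        exact ContinuousLinearMap.integral_comp_comm (innerSL ℝ (s x)) hx

end Helpers

/-- Let `U` be any subspace of `V` (the square-integrable functions
`𝒳 → ℝᵏ` w.r.t. a `𝒢`-invariant measure `μ`) closed under the averaging operator `𝒬`.
With `S = {f ∈ U : f is 𝒢-equivariant}` and `A = {f ∈ U : 𝒬f = 0}`, every `u ∈ U` can be
written uniquely (μ-a.e.) as `u = s + a` with `s ∈ S`, `a ∈ A` and `⟨s, a⟩_μ = 0`: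
the orthogonal decomposition `U = S ⊕ A`. -/
theorem stmt0 {G X : Type*} [Group G] [MeasurableSpace G] [MeasurableSpace X] [MulAction G X]
    {k : ℕ}
    (lam : Measure G) [IsProbabilityMeasure lam]
    (hlinv : ∀ g : G, lam.map (fun h => g * h) = lam)
    (hrinv : ∀ g : G, lam.map (fun h => h * g) = lam)
    (ψ : G →* (EuclideanSpace ℝ (Fin k) ≃ₗᵢ[ℝ] EuclideanSpace ℝ (Fin k)))
    (hψ : Measurable fun p : G × EuclideanSpace ℝ (Fin k) => ψ p.1 p.2)
    (hact : Measurable fun p : G × X => p.1 • p.2)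
    (μ : Measure X) [SigmaFinite μ]
    (hμinv : ∀ g : G, μ.map (fun x => g • x) = μ)
    (U : Set (X → EuclideanSpace ℝ (Fin k)))
    (hUV : ∀ f ∈ U, MemLp f 2 μ)
    (hU0 : (0 : X → EuclideanSpace ℝ (Fin k)) ∈ U)
    (hUadd : ∀ f ∈ U, ∀ h ∈ U, f + h ∈ U)
    (hUsmul : ∀ c : ℝ, ∀ f ∈ U, c • f ∈ U)
    (hUQ : ∀ f ∈ U, Qavg lam ψ f ∈ U) :
    ∀ u ∈ U, ∃ s ∈ U, ∃ a ∈ U,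
      (∀ (g : G) (x : X), s (g • x) = ψ g (s x)) ∧
      (Qavg lam ψ a =ᵐ[μ] 0) ∧
      (u =ᵐ[μ] s + a) ∧
      (∫ x, (inner ℝ (s x) (a x) : ℝ) ∂μ = 0) ∧
      (∀ s' ∈ U, ∀ a' ∈ U,
        (∀ (g : G) (x : X), s' (g • x) = ψ g (s' x)) →
        (Qavg lam ψ a' =ᵐ[μ] 0) →
        (u =ᵐ[μ] s' + a') → s' =ᵐ[μ] s ∧ a' =ᵐ[μ] a) := by
  intro u hu
  have hu2 := hUV u hu
  set ut : X → EuclideanSpace ℝ (Fin k) := hu2.1.mk u with hut_def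
  have hutm : StronglyMeasurable ut := hu2.1.stronglyMeasurable_mk
  have huut : u =ᵐ[μ] ut := hu2.1.ae_eq_mk
  have hut2 : MemLp ut 2 μ := hu2.ae_eq huut
  set s : X → EuclideanSpace ℝ (Fin k) := Qavg lam ψ u with hs_def
  have hsU : s ∈ U := hUQ u hu
  set a : X → EuclideanSpace ℝ (Fin k) := u + (-1:ℝ) • s with ha_def
  have haU : a ∈ U := hUadd u hu _ (hUsmul (-1) s hsU)
  have ha_eq : ∀ x, a x = u x - s x := by
    intro x
    show u x + (-1:ℝ) • s x = u x - s x
    rw [neg_one_smul, sub_eq_add_neg]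
  have hsa : s + a = u := by
    funext x
    show s x + (u x + (-1:ℝ) • s x) = u x
    rw [neg_one_smul]
    abel
  have hequiv : ∀ (g : G) (x : X), s (g • x) = ψ g (s x) :=
    fun g x => qavg_equivariant ψ lam hrinv u g x
  have hI : ∀ᵐ x ∂μ, (∀ᵐ g ∂lam, u (g • x) = ut (g • x)) ∧
      Integrable (fun g => ψ g⁻¹ (ut (g • x))) lam :=
    (ae_ae_smul_eq lam hact μ hμinv huut).and
      (ae_integrable_qavg ψ lam hψ hact μ hμinv hutm.measurable hut2)
  have hQa0 : Qavg lam ψ a =ᵐ[μ] 0 := by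
    filter_upwards [hI] with x hx
    obtain ⟨hx1, hx2⟩ := hx
    have hint_u : ∫ g, ψ g⁻¹ (u (g • x)) ∂lam = ∫ g, ψ g⁻¹ (ut (g • x)) ∂lam :=
      integral_congr_ae (hx1.mono fun g hg => by simp only [hg])
    show ∫ g, ψ g⁻¹ (a (g • x)) ∂lam = 0
    have integrand_eq : ∀ᵐ g ∂lam,
        ψ g⁻¹ (a (g • x)) = ψ g⁻¹ (ut (g • x)) - s x := by
      filter_upwards [hx1] with g hg
      rw [ha_eq (g • x), map_sub, hg, hequiv g x, psi_inv_apply]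
    rw [integral_congr_ae integrand_eq, integral_sub hx2 (integrable_const _), integral_const]
    have hsx : s x = ∫ g, ψ g⁻¹ (u (g • x)) ∂lam := rfl
    rw [← hint_u, ← hsx]
    simp
  have hu_eq : u =ᵐ[μ] s + a := Filter.EventuallyEq.of_eq hsa.symm
  -- measurable representatives for orthogonality
  set st : X → EuclideanSpace ℝ (Fin k) := Qavg lam ψ ut with hst_def
  have hstm : StronglyMeasurable st := stronglyMeasurable_qavg ψ lam hψ hact hutm.measurable
  have hsst : s =ᵐ[μ] st := qavg_congr_ae ψ lam hact μ hμinv huut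
  have hst2 : MemLp st 2 μ := (hUV s hsU).ae_eq hsst
  have hstequiv : ∀ (g : G) (x : X), st (g • x) = ψ g (st x) :=
    fun g x => qavg_equivariant ψ lam hrinv ut g x
  set att : X → EuclideanSpace ℝ (Fin k) := fun x => ut x - st x with hatt_def
  have haatt : a =ᵐ[μ] att := by
    filter_upwards [huut, hsst] with x h1 h2
    rw [ha_eq x, h1, h2]
  have hattm : Measurable att := hutm.measurable.sub hstm.measurable
  have hatt2 : MemLp att 2 μ := (hUV a haU).ae_eq haatt
  have hQatt0 : Qavg lam ψ att =ᵐ[μ] 0 :=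
    (qavg_congr_ae ψ lam hact μ hμinv haatt).symm.trans hQa0
  have horth : ∫ x, (inner ℝ (s x) (a x) : ℝ) ∂μ = 0 := by
    have h1 : ∫ x, (inner ℝ (s x) (a x) : ℝ) ∂μ = ∫ x, ⟪st x, att x⟫ ∂μ := by
      refine integral_congr_ae ?_
      filter_upwards [hsst, haatt] with x e1 e2
      rw [e1, e2]
    rw [h1, ortho_key ψ lam hrinv hψ hact μ hμinv hstm.measurable hst2 hstequiv hattm hatt2]
    have h2 : ∫ x, ⟪st x, Qavg lam ψ att x⟫ ∂μ = ∫ x, (0:ℝ) ∂μ := by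
      refine integral_congr_ae ?_
      filter_upwards [hQatt0] with x hx
      rw [show Qavg lam ψ att x = 0 from hx, inner_zero_right]
    rw [h2, integral_zero]
  refine ⟨s, hsU, a, haU, hequiv, hQa0, hu_eq, horth, ?_⟩
  -- uniqueness
  intro s' hs' a' ha' hs'equiv hQa'0 hu'
  have ha'2 := hUV a' ha'
  set at2 : X → EuclideanSpace ℝ (Fin k) := ha'2.1.mk a' with hat2_def
  have hat2m : StronglyMeasurable at2 := ha'2.1.stronglyMeasurable_mk
  have haat2 : a' =ᵐ[μ] at2 := ha'2.1.ae_eq_mk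
  have hat22 : MemLp at2 2 μ := ha'2.ae_eq haat2
  have hI' : ∀ᵐ x ∂μ, (∀ᵐ g ∂lam, a' (g • x) = at2 (g • x)) ∧
      Integrable (fun g => ψ g⁻¹ (at2 (g • x))) lam :=
    (ae_ae_smul_eq lam hact μ hμinv haat2).and
      (ae_integrable_qavg ψ lam hψ hact μ hμinv hat2m.measurable hat22)
  have hQsum : Qavg lam ψ u =ᵐ[μ] Qavg lam ψ (s' + a') :=
    qavg_congr_ae ψ lam hact μ hμinv hu'
  have hQsum2 : Qavg lam ψ (s' + a') =ᵐ[μ] s' := by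
    filter_upwards [hI', hQa'0] with x hx hx3
    obtain ⟨hx1, hx2⟩ := hx
    show ∫ g, ψ g⁻¹ ((s' + a') (g • x)) ∂lam = s' x
    have integrand_eq : ∀ᵐ g ∂lam,
        ψ g⁻¹ ((s' + a') (g • x)) = s' x + ψ g⁻¹ (at2 (g • x)) := by
      filter_upwards [hx1] with g hg
      show ψ g⁻¹ (s' (g • x) + a' (g • x)) = _
      rw [map_add, hs'equiv g x, psi_inv_apply, hg]
    rw [integral_congr_ae integrand_eq, integral_add (integrable_const _) hx2, integral_const]
    have h4 : ∫ g, ψ g⁻¹ (at2 (g • x)) ∂lam = ∫ g, ψ g⁻¹ (a' (g • x)) ∂lam :=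
      integral_congr_ae (hx1.mono fun g hg => by simp only [hg])
    have hx3' : ∫ g, ψ g⁻¹ (a' (g • x)) ∂lam = 0 := hx3
    rw [h4, hx3']
    simp
  have hs's : s' =ᵐ[μ] s := (hQsum.trans hQsum2).symm
  refine ⟨hs's, ?_⟩
  filter_upwards [hu', hs's] with x h1 h2
  have h3 : a' x = u x - s' x := by
    have : u x = s' x + a' x := h1
    rw [this]; abel
  rw [h3, h2, ← ha_eq x]
end

section
/- For any f ∈ V, the orbit-averaged function 𝒪f is the μ-a.e. unique solution of the least-squares problem over the 𝒢-invariant functions: 𝒪f = argmin_{s ∈ S} ‖f − s‖_μ², where S = {s ∈ V : s is 𝒢-invariant}. That is, ‖f − 𝒪f‖_μ ≤ ‖f − s‖_μ for all s ∈ S, with equality only if s = 𝒪f μ-a.e. -/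
open MeasureTheory
open scoped ENNReal NNReal

/-- The orbit-averaging operator `𝒪`: `(𝒪 f)(x) = ∫_𝒢 f(g • x) dλ(g)`. -/
noncomputable def Oavg {G X : Type*} [Group G] [MeasurableSpace G] [MulAction G X] {k : ℕ}
    (lam : Measure G)
    (f : X → EuclideanSpace ℝ (Fin k)) : X → EuclideanSpace ℝ (Fin k) :=
  fun x => ∫ g, f (g • x) ∂lam

section Aux

variable {α : Type*} {mα : MeasurableSpace α} {μ : Measure α}
variable {E : Type*} [NormedAddCommGroup E] [InnerProductSpace ℝ E]

/-- Pointwise inner product of two `L²` functions is integrable. -/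
lemma integrable_inner_of_memL2 {u v : α → E} (hu : MemLp u 2 μ) (hv : MemLp v 2 μ) :
    Integrable (fun x => (inner ℝ (u x) (v x) : ℝ)) μ := by
  have h := L2.integrable_inner (𝕜 := ℝ) (hu.toLp u) (hv.toLp v)
  refine h.congr ?_
  filter_upwards [hu.coeFn_toLp, hv.coeFn_toLp] with x h1 h2
  rw [h1, h2]

/-- Jensen/Cauchy–Schwarz: for a probability measure, `(∫⁻ u)² ≤ ∫⁻ u²`. -/
lemma sq_lintegral_le_lintegral_sq (ν : Measure α) [IsProbabilityMeasure ν]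
    {u : α → ℝ≥0∞} (hu : AEMeasurable u ν) :
    (∫⁻ a, u a ∂ν) ^ (2 : ℝ) ≤ ∫⁻ a, u a ^ (2 : ℝ) ∂ν := by
  have hpq : Real.HolderConjugate 2 2 := Real.HolderConjugate.two_two
  have h := ENNReal.lintegral_mul_le_Lp_mul_Lq ν hpq (g := fun _ => 1) hu aemeasurable_const
  have h1 : ∫⁻ a, (fun a => u a) a * (fun _ => (1:ℝ≥0∞)) a ∂ν = ∫⁻ a, u a ∂ν := by
    simp
  have h2 : ∫⁻ a, ((fun _ => (1:ℝ≥0∞)) a) ^ (2:ℝ) ∂ν = 1 := by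
    simp
  rw [show (fun a => u a) * (fun _ => (1:ℝ≥0∞)) = fun a => u a * 1 from rfl] at h
  simp only [mul_one] at h
  rw [h2, ENNReal.one_rpow, mul_one] at h
  calc (∫⁻ a, u a ∂ν) ^ (2:ℝ) ≤ ((∫⁻ a, u a ^ (2:ℝ) ∂ν) ^ (1/2 : ℝ)) ^ (2:ℝ) :=
        ENNReal.rpow_le_rpow h (by norm_num)
    _ = ∫⁻ a, u a ^ (2:ℝ) ∂ν := by
        rw [← ENNReal.rpow_mul]; norm_num

end Aux

/-- (Feature averaging as a least-squares problem.) For any `f ∈ V`, the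
orbit-averaged function `𝒪f` is the μ-a.e. unique solution of the least-squares problem over
the `𝒢`-invariant functions `S`: `‖f − 𝒪f‖_μ ≤ ‖f − s‖_μ` for all `s ∈ S`, with equality only
if `s = 𝒪f` μ-a.e. -/
theorem stmt5 {G X : Type*} [Group G] [MeasurableSpace G] [MeasurableSpace X] [MulAction G X]
    {k : ℕ}
    (lam : Measure G) [IsProbabilityMeasure lam]
    (hlinv : ∀ g : G, lam.map (fun h => g * h) = lam)
    (hrinv : ∀ g : G, lam.map (fun h => h * g) = lam)
    (hact : Measurable fun p : G × X => p.1 • p.2)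
    (μ : Measure X) [SigmaFinite μ]
    (hμinv : ∀ g : G, μ.map (fun x => g • x) = μ)
    (f : X → EuclideanSpace ℝ (Fin k)) (hf : MemLp f 2 μ) :
    ∀ s : X → EuclideanSpace ℝ (Fin k), MemLp s 2 μ →
      (∀ (g : G) (x : X), s (g • x) = s x) →
      eLpNorm (f - Oavg lam f) 2 μ ≤ eLpNorm (f - s) 2 μ ∧
      (eLpNorm (f - s) 2 μ = eLpNorm (f - Oavg lam f) 2 μ → s =ᵐ[μ] Oavg lam f) := by
  classical
  intro s hs hsinv
  -- a strongly measurable representative of `f`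
  set f₀ : X → EuclideanSpace ℝ (Fin k) := hf.1.mk f with hf₀def
  have hf₀sm : StronglyMeasurable f₀ := hf.1.stronglyMeasurable_mk
  have hff₀ : f =ᵐ[μ] f₀ := hf.1.ae_eq_mk
  have hf₀ : MemLp f₀ 2 μ := hf.ae_eq hff₀
  -- basic measurability facts
  have hsmul : ∀ g : G, Measurable fun x : X => g • x := fun g =>
    hact.comp (measurable_const.prodMk measurable_id)
  have hsmulG : ∀ x : X, Measurable fun g : G => g • x := fun x =>
    hact.comp (measurable_id.prodMk measurable_const)
  have hmpg : ∀ g : G, MeasurePreserving (fun x : X => g • x) μ μ := fun g =>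
    ⟨hsmul g, hμinv g⟩
  -- the action map is measure preserving from `lam.prod μ` to `μ`
  have hmp : MeasurePreserving (fun p : G × X => p.1 • p.2) (lam.prod μ) μ := by
    refine ⟨hact, ?_⟩
    ext A hA
    rw [Measure.map_apply hact hA, Measure.prod_apply (hact hA)]
    have hsec : ∀ g : G, μ (Prod.mk g ⁻¹' ((fun p : G × X => p.1 • p.2) ⁻¹' A)) = μ A := by
      intro g
      have h := (hmpg g).measure_preimage hA.nullMeasurableSet
      exact h
    simp_rw [hsec]
    simp
  -- the averaged representative
  set F : X → EuclideanSpace ℝ (Fin k) := fun x => ∫ g, f₀ (g • x) ∂lam with hFdef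
  have hFsm : StronglyMeasurable F :=
    StronglyMeasurable.integral_prod_left' (μ := lam) (hf₀sm.comp_measurable hact)
  -- right translations are a.e. measurable (from the nonvanishing of `lam.map`)
  have hmulae : ∀ g₀ : G, AEMeasurable (fun h : G => h * g₀) lam := by
    intro g₀
    by_contra hcon
    have h0 : lam.map (fun h : G => h * g₀) = 0 := Measure.map_of_not_aemeasurable hcon
    rw [hrinv g₀] at h0
    exact (IsProbabilityMeasure.ne_zero lam) h0
  -- invariance of F (everywhere)
  have hFinv : ∀ (g : G) (x : X), F (g • x) = F x := by
    intro g₀ x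
    have h1 : F (g₀ • x) = ∫ g, f₀ ((g * g₀) • x) ∂lam := by
      simp only [hFdef]
      congr 1
      funext g
      rw [mul_smul]
    have hsm : AEStronglyMeasurable (fun g : G => f₀ (g • x)) (lam.map fun h : G => h * g₀) := by
      rw [hrinv g₀]
      exact (hf₀sm.comp_measurable (hsmulG x)).aestronglyMeasurable
    have h2 : ∫ g, f₀ (g • x) ∂lam = ∫ g, f₀ ((g * g₀) • x) ∂lam := by
      conv_lhs => rw [← hrinv g₀]
      rw [integral_map (hmulae g₀) hsm]
    rw [h1, ← h2]
  -- finiteness of the square integral of f₀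
  have hmeas_sq : Measurable fun x : X => (‖f₀ x‖₊ : ℝ≥0∞) ^ (2:ℝ) :=
    hf₀sm.measurable.enorm.pow_const _
  have hf₀fin : ∫⁻ x, (‖f₀ x‖₊ : ℝ≥0∞) ^ (2:ℝ) ∂μ < ⊤ := by
    have h := hf₀.2
    rw [eLpNorm_eq_lintegral_rpow_enorm_toReal two_ne_zero ENNReal.ofNat_ne_top] at h
    simp only [ENNReal.toReal_ofNat] at h
    have := (ENNReal.rpow_lt_top_iff_of_pos (by norm_num : (0:ℝ) < 1/2)).mp h
    exact this
  have hmeas_prod : Measurable fun p : G × X => (‖f₀ (p.1 • p.2)‖₊ : ℝ≥0∞) ^ (2:ℝ) :=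
    ((hf₀sm.comp_measurable hact).measurable.enorm).pow_const _
  have hprod_fin : ∫⁻ p, (‖f₀ (p.1 • p.2)‖₊ : ℝ≥0∞) ^ (2:ℝ) ∂(lam.prod μ)
      = ∫⁻ x, (‖f₀ x‖₊ : ℝ≥0∞) ^ (2:ℝ) ∂μ := hmp.lintegral_comp hmeas_sq
  have hswap_fin : ∫⁻ x, ∫⁻ g, (‖f₀ (g • x)‖₊ : ℝ≥0∞) ^ (2:ℝ) ∂lam ∂μ
      = ∫⁻ x, (‖f₀ x‖₊ : ℝ≥0∞) ^ (2:ℝ) ∂μ := by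
    rw [← hprod_fin, lintegral_prod_symm _ hmeas_prod.aemeasurable]
  -- a.e. finiteness of the fibrewise square integrals
  have hGx_fin : ∀ᵐ x ∂μ, ∫⁻ g, (‖f₀ (g • x)‖₊ : ℝ≥0∞) ^ (2:ℝ) ∂lam < ⊤ := by
    refine ae_lt_top (Measurable.lintegral_prod_left' hmeas_prod) ?_
    rw [hswap_fin]
    exact hf₀fin.ne
  -- fibrewise integrability
  have hInt_gx : ∀ᵐ x ∂μ, Integrable (fun g => f₀ (g • x)) lam := by
    filter_upwards [hGx_fin] with x hx
    have hm : MemLp (fun g => f₀ (g • x)) 2 lam := by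
      refine ⟨(hf₀sm.comp_measurable (hsmulG x)).aestronglyMeasurable, ?_⟩
      rw [eLpNorm_eq_lintegral_rpow_enorm_toReal two_ne_zero ENNReal.ofNat_ne_top]
      simp only [ENNReal.toReal_ofNat]
      exact ENNReal.rpow_lt_top_of_nonneg (by norm_num) hx.ne
    exact hm.integrable (by norm_num)
  -- F is in L²
  have hFmem : MemLp F 2 μ := by
    refine ⟨hFsm.aestronglyMeasurable, ?_⟩
    rw [eLpNorm_eq_lintegral_rpow_enorm_toReal two_ne_zero ENNReal.ofNat_ne_top]
    simp only [ENNReal.toReal_ofNat]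
    refine ENNReal.rpow_lt_top_of_nonneg (by norm_num) ?_
    have hbound : ∀ x : X, (‖F x‖₊ : ℝ≥0∞) ^ (2:ℝ)
        ≤ ∫⁻ g, (‖f₀ (g • x)‖₊ : ℝ≥0∞) ^ (2:ℝ) ∂lam := by
      intro x
      calc (‖F x‖₊ : ℝ≥0∞) ^ (2:ℝ)
          ≤ (∫⁻ g, (‖f₀ (g • x)‖₊ : ℝ≥0∞) ∂lam) ^ (2:ℝ) := by
            exact ENNReal.rpow_le_rpow (enorm_integral_le_lintegral_enorm _) (by norm_num)
        _ ≤ ∫⁻ g, (‖f₀ (g • x)‖₊ : ℝ≥0∞) ^ (2:ℝ) ∂lam :=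
            sq_lintegral_le_lintegral_sq lam
              ((hf₀sm.comp_measurable (hsmulG x)).measurable.enorm).aemeasurable
    have : ∫⁻ x, (‖F x‖₊ : ℝ≥0∞) ^ (2:ℝ) ∂μ
        ≤ ∫⁻ x, ∫⁻ g, (‖f₀ (g • x)‖₊ : ℝ≥0∞) ^ (2:ℝ) ∂lam ∂μ :=
      lintegral_mono hbound
    rw [hswap_fin] at this
    exact (lt_of_le_of_lt this hf₀fin).ne
  -- Orthogonality: `f₀ - F` is orthogonal to every invariant L² function
  have horth : ∀ h : X → EuclideanSpace ℝ (Fin k), MemLp h 2 μ → (∀ (g : G) (x : X), h (g • x) = h x) →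
      ∫ x, (inner ℝ (f₀ x - F x) (h x) : ℝ) ∂μ = 0 := by
    intro h hh hhinv
    have hfa : MemLp (fun p : G × X => f₀ (p.1 • p.2)) 2 (lam.prod μ) :=
      hf₀.comp_measurePreserving hmp
    have hsnd : MeasurePreserving (Prod.snd : G × X → X) (lam.prod μ) μ := by
      refine ⟨measurable_snd, ?_⟩
      rw [Measure.map_snd_prod, measure_univ, one_smul]
    have hhp : MemLp (fun p : G × X => h p.2) 2 (lam.prod μ) := hh.comp_measurePreserving hsnd
    have hΦint : Integrable (fun p : G × X => (inner ℝ (f₀ (p.1 • p.2)) (h p.2) : ℝ))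
        (lam.prod μ) := integrable_inner_of_memL2 hfa hhp
    have step1 : ∫ x, (inner ℝ (F x) (h x) : ℝ) ∂μ
        = ∫ x, ∫ g, (inner ℝ (f₀ (g • x)) (h x) : ℝ) ∂lam ∂μ := by
      refine integral_congr_ae ?_
      filter_upwards [hInt_gx] with x hx
      have := integral_inner (𝕜 := ℝ) hx (h x)
      simp only [hFdef]
      rw [real_inner_comm, ← this]
      simp_rw [real_inner_comm]
    have step2 : ∫ x, ∫ g, (inner ℝ (f₀ (g • x)) (h x) : ℝ) ∂lam ∂μ
        = ∫ g, ∫ x, (inner ℝ (f₀ (g • x)) (h x) : ℝ) ∂μ ∂lam := by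
      rw [← integral_prod_symm _ hΦint, integral_prod _ hΦint]
    have step3 : ∀ g : G, ∫ x, (inner ℝ (f₀ (g • x)) (h x) : ℝ) ∂μ
        = ∫ x, (inner ℝ (f₀ x) (h x) : ℝ) ∂μ := by
      intro g
      have hrw : (fun x => (inner ℝ (f₀ (g • x)) (h x) : ℝ))
          = fun x => (inner ℝ (f₀ (g • x)) (h (g • x)) : ℝ) := by
        funext x; rw [hhinv g x]
      rw [hrw]
      have hφ : AEStronglyMeasurable (fun x => (inner ℝ (f₀ x) (h x) : ℝ)) (μ.map fun x => g • x) := by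
        rw [hμinv g]
        exact hf₀sm.aestronglyMeasurable.inner hh.1
      calc ∫ x, (inner ℝ (f₀ (g • x)) (h (g • x)) : ℝ) ∂μ
          = ∫ y, (inner ℝ (f₀ y) (h y) : ℝ) ∂(μ.map fun x => g • x) :=
            (integral_map (hsmul g).aemeasurable hφ).symm
        _ = ∫ x, (inner ℝ (f₀ x) (h x) : ℝ) ∂μ := by rw [hμinv g]
    have hFh : ∫ x, (inner ℝ (F x) (h x) : ℝ) ∂μ = ∫ x, (inner ℝ (f₀ x) (h x) : ℝ) ∂μ := by
      rw [step1, step2]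
      simp_rw [step3]
      simp
    have hint1 : Integrable (fun x => (inner ℝ (f₀ x) (h x) : ℝ)) μ :=
      integrable_inner_of_memL2 hf₀ hh
    have hint2 : Integrable (fun x => (inner ℝ (F x) (h x) : ℝ)) μ :=
      integrable_inner_of_memL2 hFmem hh
    have : ∫ x, (inner ℝ (f₀ x - F x) (h x) : ℝ) ∂μ
        = (∫ x, (inner ℝ (f₀ x) (h x) : ℝ) ∂μ) - ∫ x, (inner ℝ (F x) (h x) : ℝ) ∂μ := by
      rw [← integral_sub hint1 hint2]
      congr 1
      funext x
      rw [inner_sub_left]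
    rw [this, hFh, sub_self]
  -- Pythagoras in L²
  have hBmem : MemLp (f₀ - F) 2 μ := hf₀.sub hFmem
  have hCmem : MemLp (F - s) 2 μ := hFmem.sub hs
  have hAmem : MemLp (f₀ - s) 2 μ := hf₀.sub hs
  set A : Lp (EuclideanSpace ℝ (Fin k)) 2 μ := hAmem.toLp (f₀ - s) with hAdef
  set B : Lp (EuclideanSpace ℝ (Fin k)) 2 μ := hBmem.toLp (f₀ - F) with hBdef
  set C : Lp (EuclideanSpace ℝ (Fin k)) 2 μ := hCmem.toLp (F - s) with hCdef
  have hfun : f₀ - s = (f₀ - F) + (F - s) := by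
    funext x
    simp only [Pi.sub_apply, Pi.add_apply]
    abel
  have hABC : A = B + C := by
    rw [hAdef, hBdef, hCdef, ← MemLp.toLp_add]
    exact MemLp.toLp_congr _ _ (by rw [hfun])
  have hBC : inner ℝ B C = 0 := by
    rw [L2.inner_def]
    have h0 := horth (F - s) hCmem
      (fun g x => by simp only [Pi.sub_apply, hFinv g x, hsinv g x])
    rw [← h0]
    refine integral_congr_ae ?_
    have hc1 : ⇑B =ᵐ[μ] (f₀ - F) := hBmem.coeFn_toLp
    have hc2 : ⇑C =ᵐ[μ] (F - s) := hCmem.coeFn_toLp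
    filter_upwards [hc1, hc2] with x h1 h2
    rw [h1, h2]
    simp [Pi.sub_apply]
  have hpyth : ‖A‖ ^ 2 = ‖B‖ ^ 2 + ‖C‖ ^ 2 := by
    rw [hABC, @norm_add_sq_real, hBC]
    ring
  -- relate eLpNorms
  have hOF : Oavg lam f =ᵐ[μ] F := by
    have h1 : (fun p : G × X => f (p.1 • p.2)) =ᵐ[lam.prod μ] fun p => f₀ (p.1 • p.2) :=
      hmp.quasiMeasurePreserving.ae_eq_comp hff₀
    have h2 : (fun p : X × G => f (p.2 • p.1)) =ᵐ[μ.prod lam] fun p => f₀ (p.2 • p.1) :=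
      (Measure.measurePreserving_swap).quasiMeasurePreserving.ae_eq_comp h1
    have h3 := Measure.ae_ae_of_ae_prod h2
    filter_upwards [h3] with x hx
    exact integral_congr_ae hx
  have heq1 : eLpNorm (f - s) 2 μ = eLpNorm (f₀ - s) 2 μ := by
    refine eLpNorm_congr_ae ?_
    filter_upwards [hff₀] with x hx
    simp [Pi.sub_apply, hx]
  have heq2 : eLpNorm (f - Oavg lam f) 2 μ = eLpNorm (f₀ - F) 2 μ := by
    refine eLpNorm_congr_ae ?_
    filter_upwards [hff₀, hOF] with x h1 h2
    simp [Pi.sub_apply, h1, h2]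
  have hnA : ‖A‖ = (eLpNorm (f₀ - s) 2 μ).toReal := Lp.norm_toLp _ _
  have hnB : ‖B‖ = (eLpNorm (f₀ - F) 2 μ).toReal := Lp.norm_toLp _ _
  constructor
  · rw [heq1, heq2]
    rw [← ENNReal.toReal_le_toReal hBmem.2.ne hAmem.2.ne]
    rw [← hnA, ← hnB]
    have h2 : ‖B‖ ^ 2 ≤ ‖A‖ ^ 2 := by
      rw [hpyth]
      have := sq_nonneg ‖C‖
      linarith
    exact (pow_le_pow_iff_left₀ (norm_nonneg B) (norm_nonneg A) two_ne_zero).mp h2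
  · intro heqn
    rw [heq1, heq2] at heqn
    have hAB : ‖A‖ = ‖B‖ := by rw [hnA, hnB, heqn]
    have hC0 : ‖C‖ = 0 := by
      have : ‖C‖ ^ 2 = 0 := by
        have := hpyth
        rw [hAB] at this
        linarith
      exact pow_eq_zero_iff two_ne_zero |>.mp this
    have hCz : C = 0 := norm_eq_zero.mp hC0
    have hFs : (F - s : X → EuclideanSpace ℝ (Fin k)) =ᵐ[μ] 0 := by
      have hc2 : ⇑C =ᵐ[μ] (F - s) := hCmem.coeFn_toLp
      rw [hCz] at hc2
      exact (Lp.coeFn_zero _ _ _).symm.trans hc2 |>.symm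
    have hsF : s =ᵐ[μ] F := by
      filter_upwards [hFs] with x hx
      have hx' : F x - s x = 0 := hx
      exact (sub_eq_zero.mp hx').symm
    exact hsF.trans hOF.symm
end

section
/- Let X ∼ μ where μ is a 𝒢-invariant probability distribution on 𝒳, and let Y = f*(X) + ξ ∈ ℝᵏ, where ξ is a random element of ℝᵏ independent of X with zero mean and finite variance, and f*: 𝒳 → ℝᵏ is 𝒢-equivariant. Then for any f ∈ V, the generalisation gap satisfies Δ(f, 𝒬f) := E[‖Y − f(X)‖₂²] − E[‖Y − (𝒬f)(X)‖₂²] = ‖f^⊥‖_μ², where f^⊥ = f − 𝒬f. -/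
set_option maxHeartbeats 2000000

open MeasureTheory ProbabilityTheory

lemma integrable_inner_of_memL2_s7 {α : Type*} {mα : MeasurableSpace α} {μ : Measure α}
    {E' : Type*} [NormedAddCommGroup E'] [InnerProductSpace ℝ E']
    {F G : α → E'} (hF : MemLp F 2 μ) (hG : MemLp G 2 μ) :
    Integrable (fun x => (inner ℝ (F x) (G x) : ℝ)) μ := by
  have h := MeasureTheory.L2.integrable_inner (𝕜 := ℝ) (hF.toLp F) (hG.toLp G)
  apply h.congr
  filter_upwards [hF.coeFn_toLp, hG.coeFn_toLp] with x h1 h2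
  rw [h1, h2]

lemma sq_integral_le {α : Type*} {mα : MeasurableSpace α} (m : Measure α)
    [IsProbabilityMeasure m] {h : α → ℝ} (h1 : Integrable h m)
    (h2 : Integrable (fun x => h x ^ 2) m) :
    (∫ x, h x ∂m) ^ 2 ≤ ∫ x, h x ^ 2 ∂m := by
  set c := ∫ x, h x ∂m with hc
  have h0 : 0 ≤ ∫ x, (h x - c) ^ 2 ∂m := integral_nonneg fun x => sq_nonneg _
  have hrw : ∀ x, (h x - c) ^ 2 = h x ^ 2 - 2 * c * h x + c ^ 2 := fun x => by ring
  rw [integral_congr_ae (ae_of_all _ hrw)] at h0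
  have i1 : Integrable (fun a => h a ^ 2 - 2 * c * h a) m := h2.sub (h1.const_mul (2 * c))
  rw [integral_add i1 (integrable_const _),
    integral_sub h2 (h1.const_mul (2 * c)), MeasureTheory.integral_const_mul, integral_const] at h0
  simp only [probReal_univ, measure_univ, ENNReal.toReal_one, smul_eq_mul, one_mul] at h0
  nlinarith [h0]

lemma coord_abs_le_norm {k : ℕ} (w : EuclideanSpace ℝ (Fin k)) (i : Fin k) : |w i| ≤ ‖w‖ := by
  have h := abs_real_inner_le_norm (EuclideanSpace.single i (1:ℝ)) w
  simpa [EuclideanSpace.inner_single_left, EuclideanSpace.norm_single] using h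

/-- Let `X ∼ μ` with `μ` a `𝒢`-invariant probability distribution, and
`Y = f*(X) + ξ` with `ξ` independent of `X`, mean zero and finite variance, and `f*`
`𝒢`-equivariant. Then for any `f ∈ V`, the generalisation gap satisfies
`Δ(f, 𝒬f) := E‖Y − f(X)‖₂² − E‖Y − (𝒬f)(X)‖₂² = ‖f − 𝒬f‖_μ²`. -/
theorem stmt7 {G X Ω : Type*} [Group G] [MeasurableSpace G] [MeasurableSpace X]
    [MeasurableSpace Ω] [MulAction G X] {k : ℕ}
    (lam : Measure G) [IsProbabilityMeasure lam]
    (hlinv : ∀ g : G, lam.map (fun h => g * h) = lam)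
    (hrinv : ∀ g : G, lam.map (fun h => h * g) = lam)
    (ψ : G →* (EuclideanSpace ℝ (Fin k) ≃ₗᵢ[ℝ] EuclideanSpace ℝ (Fin k)))
    (hψ : Measurable fun p : G × EuclideanSpace ℝ (Fin k) => ψ p.1 p.2)
    (hact : Measurable fun p : G × X => p.1 • p.2)
    (μ : Measure X) [IsProbabilityMeasure μ]
    (hμinv : ∀ g : G, μ.map (fun x => g • x) = μ)
    (P : Measure Ω) [IsProbabilityMeasure P]
    (Xr : Ω → X) (hXrm : Measurable Xr) (hXrlaw : P.map Xr = μ)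
    (ξ : Ω → EuclideanSpace ℝ (Fin k)) (hξm : Measurable ξ)
    (hξ2 : MemLp ξ 2 P) (hξmean : ∫ ω, ξ ω ∂P = 0)
    (hindep : IndepFun Xr ξ P)
    (fstar : X → EuclideanSpace ℝ (Fin k)) (hfstar : MemLp fstar 2 μ)
    (hfstarEquiv : ∀ (g : G) (x : X), fstar (g • x) = ψ g (fstar x))
    (f : X → EuclideanSpace ℝ (Fin k)) (hf : MemLp f 2 μ) :
    (∫ ω, ‖fstar (Xr ω) + ξ ω - f (Xr ω)‖ ^ 2 ∂P)
      - (∫ ω, ‖fstar (Xr ω) + ξ ω - Qavg lam ψ f (Xr ω)‖ ^ 2 ∂P)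
      = ∫ x, ‖f x - Qavg lam ψ f x‖ ^ 2 ∂μ := by
  classical
  -- basic facts about ψ
  have hψcomp : ∀ (g : G) (v : EuclideanSpace ℝ (Fin k)), ψ g (ψ g⁻¹ v) = v := by
    intro g v
    have h1 : ψ g * ψ g⁻¹ = 1 := by rw [← map_mul, mul_inv_cancel, map_one]
    have h2 : (ψ g * ψ g⁻¹) v = v := by rw [h1]; rfl
    rwa [LinearIsometryEquiv.coe_mul, Function.comp_apply] at h2
  -- joint measurability of (g, v) ↦ ψ g⁻¹ v
  have hψinv : Measurable (fun p : G × EuclideanSpace ℝ (Fin k) => ψ p.1⁻¹ p.2) := by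
    have key : ∀ (g : G) (v : EuclideanSpace ℝ (Fin k)),
        ψ g⁻¹ v = ∑ i, (inner ℝ (ψ g (EuclideanSpace.basisFun (Fin k) ℝ i)) v : ℝ) •
          (EuclideanSpace.basisFun (Fin k) ℝ) i := by
      intro g v
      set b := EuclideanSpace.basisFun (Fin k) ℝ
      conv_lhs => rw [← b.sum_repr' (ψ g⁻¹ v)]
      refine Finset.sum_congr rfl fun i _ => ?_
      congr 1
      calc (inner ℝ (b i) (ψ g⁻¹ v) : ℝ)
          = inner ℝ (ψ g (b i)) (ψ g (ψ g⁻¹ v)) := ((ψ g).inner_map_map _ _).symm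
        _ = inner ℝ (ψ g (b i)) v := by rw [hψcomp]
    have heq : (fun p : G × EuclideanSpace ℝ (Fin k) => ψ p.1⁻¹ p.2)
        = fun p => ∑ i, (inner ℝ (ψ p.1 (EuclideanSpace.basisFun (Fin k) ℝ i)) p.2 : ℝ) •
          (EuclideanSpace.basisFun (Fin k) ℝ) i := by
      funext p; exact key p.1 p.2
    rw [heq]
    refine Finset.measurable_sum _ fun i _ => Measurable.smul_const ?_ _
    exact (hψ.comp (measurable_fst.prodMk measurable_const)).inner measurable_snd
  -- right translations are a.e. measurable
  have hrmeas : ∀ g : G, AEMeasurable (fun h => h * g) lam := by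
    intro g
    by_contra hc
    have h0 := hrinv g
    rw [Measure.map_of_not_aemeasurable hc] at h0
    exact (IsProbabilityMeasure.ne_zero lam) h0.symm
  -- the action map on the product
  have hTmeas : Measurable (fun p : X × G => p.2 • p.1) := hact.comp measurable_swap
  have hmapT : (μ.prod lam).map (fun p : X × G => p.2 • p.1) = μ := by
    have h1 : (μ.prod lam).map (fun p : X × G => p.2 • p.1)
        = ((μ.prod lam).map Prod.swap).map (fun p : G × X => p.1 • p.2) := by
      rw [Measure.map_map hact measurable_swap]; rfl
    rw [h1, Measure.prod_swap]
    ext s hs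
    rw [Measure.map_apply hact hs, Measure.prod_apply (hact hs)]
    have hslice : ∀ g : G, μ (Prod.mk g ⁻¹' ((fun p : G × X => p.1 • p.2) ⁻¹' s)) = μ s := by
      intro g
      have hgm : Measurable (fun x : X => g • x) :=
        hact.comp (measurable_const.prodMk measurable_id)
      conv_rhs => rw [← hμinv g]
      rw [Measure.map_apply hgm hs]
      rfl
    simp_rw [hslice]
    simp
  -- measurable representatives
  obtain ⟨f', hf'sm, hff'⟩ : ∃ f'' : X → EuclideanSpace ℝ (Fin k),
      StronglyMeasurable f'' ∧ f =ᵐ[μ] f'' :=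
    ⟨hf.1.mk f, hf.1.stronglyMeasurable_mk, hf.1.ae_eq_mk⟩
  have hf'meas : Measurable f' := hf'sm.measurable
  have hf'2 : MemLp f' 2 μ := hf.ae_eq hff'
  obtain ⟨fs', hfs'sm, hfsf'⟩ : ∃ f'' : X → EuclideanSpace ℝ (Fin k),
      StronglyMeasurable f'' ∧ fstar =ᵐ[μ] f'' :=
    ⟨hfstar.1.mk fstar, hfstar.1.stronglyMeasurable_mk, hfstar.1.ae_eq_mk⟩
  have hfs'meas : Measurable fs' := hfs'sm.measurable
  have hfs'2 : MemLp fs' 2 μ := hfstar.ae_eq hfsf'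
  -- the integrand of Q on the product space
  have hFmeas : Measurable (fun p : X × G => ψ p.2⁻¹ (f' (p.2 • p.1))) :=
    hψinv.comp (measurable_snd.prodMk (hf'meas.comp hTmeas))
  have hQsm : StronglyMeasurable (Qavg lam ψ f') := by
    have := hFmeas.stronglyMeasurable.integral_prod_right' (ν := lam)
    exact this
  -- integrability on the product space
  have hnormint : Integrable (fun p : X × G => ‖f' (p.2 • p.1)‖) (μ.prod lam) := by
    have base : Integrable (fun x => ‖f' x‖) μ := (hf'2.integrable one_le_two).norm
    have base' : Integrable (fun x => ‖f' x‖)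
        ((μ.prod lam).map (fun p : X × G => p.2 • p.1)) := by rwa [hmapT]
    exact (integrable_map_measure (by rw [hmapT]; exact base.1) hTmeas.aemeasurable).1 base'
  have hnormsqint : Integrable (fun p : X × G => ‖f' (p.2 • p.1)‖ ^ 2) (μ.prod lam) := by
    have base : Integrable (fun x => ‖f' x‖ ^ 2) μ :=
      (memLp_two_iff_integrable_sq_norm hf'sm.aestronglyMeasurable).1 hf'2
    have base' : Integrable (fun x => ‖f' x‖ ^ 2)
        ((μ.prod lam).map (fun p : X × G => p.2 • p.1)) := by rwa [hmapT]
    exact (integrable_map_measure (by rw [hmapT]; exact base.1) hTmeas.aemeasurable).1 base'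
  have hF1 : Integrable (fun p : X × G => ψ p.2⁻¹ (f' (p.2 • p.1))) (μ.prod lam) := by
    refine hnormint.mono' hFmeas.aestronglyMeasurable (ae_of_all _ fun p => ?_)
    rw [LinearIsometryEquiv.norm_map]
  have haeg : ∀ᵐ x ∂μ, Integrable (fun g => ψ g⁻¹ (f' (g • x))) lam := hF1.prod_right_ae
  have haesq : ∀ᵐ x ∂μ, Integrable (fun g => ‖f' (g • x)‖ ^ 2) lam := hnormsqint.prod_right_ae
  -- Q f' is in L²
  have hQ2 : MemLp (Qavg lam ψ f') 2 μ := by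
    rw [memLp_two_iff_integrable_sq_norm hQsm.aestronglyMeasurable]
    have hdom : Integrable (fun x => ∫ g, ‖f' (g • x)‖ ^ 2 ∂lam) μ :=
      hnormsqint.integral_prod_left
    refine hdom.mono' ((hQsm.norm.pow 2).aestronglyMeasurable) ?_
    filter_upwards [haeg, haesq] with x hx hsq
    rw [Real.norm_eq_abs, abs_of_nonneg (by positivity)]
    have h1 : ‖Qavg lam ψ f' x‖ ≤ ∫ g, ‖ψ g⁻¹ (f' (g • x))‖ ∂lam :=
      norm_integral_le_integral_norm _
    simp_rw [LinearIsometryEquiv.norm_map] at h1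
    have h2 : ‖Qavg lam ψ f' x‖ ^ 2 ≤ (∫ g, ‖f' (g • x)‖ ∂lam) ^ 2 :=
      pow_le_pow_left₀ (norm_nonneg _) h1 2
    refine h2.trans (sq_integral_le lam ?_ hsq)
    have := hx.norm
    simpa only [LinearIsometryEquiv.norm_map] using this
  -- equivariance of Qavg f'
  have hQeq : ∀ (g₀ : G) (x : X), Qavg lam ψ f' (g₀ • x) = ψ g₀ (Qavg lam ψ f' x) := by
    intro g₀ x
    have hvm : Measurable (fun g : G => ψ g⁻¹ (f' (g • (g₀ • x)))) := by
      refine hψinv.comp (measurable_id.prodMk (hf'meas.comp ?_))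
      exact hact.comp (measurable_id.prodMk measurable_const)
    have h1 : Qavg lam ψ f' (g₀ • x) = ∫ g, ψ g⁻¹ (f' (g • (g₀ • x))) ∂lam := rfl
    have h2 : ∫ g, ψ g⁻¹ (f' (g • (g₀ • x))) ∂lam
        = ∫ h, ψ (h * g₀⁻¹)⁻¹ (f' ((h * g₀⁻¹) • (g₀ • x))) ∂lam := by
      conv_lhs => rw [← hrinv g₀⁻¹]
      rw [integral_map (hrmeas g₀⁻¹) (by rw [hrinv g₀⁻¹]; exact hvm.aestronglyMeasurable)]
    have h3 : ∀ h : G, ψ (h * g₀⁻¹)⁻¹ (f' ((h * g₀⁻¹) • (g₀ • x)))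
        = ψ g₀ (ψ h⁻¹ (f' (h • x))) := by
      intro h
      have e1 : (h * g₀⁻¹) • (g₀ • x) = h • x := by rw [smul_smul]; group
      have e2 : ψ (h * g₀⁻¹)⁻¹ = ψ g₀ * ψ h⁻¹ := by rw [← map_mul]; congr 1; group
      rw [e1, e2, LinearIsometryEquiv.coe_mul, Function.comp_apply]
    rw [h1, h2]
    simp_rw [h3]
    exact (ψ g₀).toLinearIsometry.integral_comp_comm (fun h => ψ h⁻¹ (f' (h • x)))
  -- key adjointness/projection property of Q
  have hK : ∀ e : X → EuclideanSpace ℝ (Fin k), MemLp e 2 μ →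
      (∀ (g : G) (x : X), e (g • x) = ψ g (e x)) →
      ∫ x, (inner ℝ (Qavg lam ψ f' x) (e x) : ℝ) ∂μ = ∫ x, (inner ℝ (f' x) (e x) : ℝ) ∂μ := by
    intro e he2 heq
    have hφint : Integrable (fun y => (inner ℝ (f' y) (e y) : ℝ)) μ :=
      integrable_inner_of_memL2_s7 hf'2 he2
    have hφaesm : AEStronglyMeasurable (fun y => (inner ℝ (f' y) (e y) : ℝ)) μ :=
      hf'sm.aestronglyMeasurable.inner he2.1
    have hΦint : Integrable
        (fun p : X × G => (inner ℝ (f' (p.2 • p.1)) (e (p.2 • p.1)) : ℝ)) (μ.prod lam) := by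
      have h0 : Integrable (fun y => (inner ℝ (f' y) (e y) : ℝ))
          ((μ.prod lam).map (fun p : X × G => p.2 • p.1)) := by rwa [hmapT]
      exact (integrable_map_measure (by rw [hmapT]; exact hφaesm) hTmeas.aemeasurable).1 h0
    have step1 : ∫ x, (inner ℝ (Qavg lam ψ f' x) (e x) : ℝ) ∂μ
        = ∫ x, ∫ g, (inner ℝ (f' (g • x)) (e (g • x)) : ℝ) ∂lam ∂μ := by
      refine integral_congr_ae ?_
      filter_upwards [haeg] with x hx
      have h1 : (inner ℝ (Qavg lam ψ f' x) (e x) : ℝ)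
          = ∫ g, (inner ℝ (ψ g⁻¹ (f' (g • x))) (e x) : ℝ) ∂lam := by
        rw [real_inner_comm]
        have h2 := integral_inner (𝕜 := ℝ) hx (e x)
        rw [show Qavg lam ψ f' x = ∫ g, ψ g⁻¹ (f' (g • x)) ∂lam from rfl, ← h2]
        exact integral_congr_ae (ae_of_all _ fun g => real_inner_comm _ _)
      rw [h1]
      refine integral_congr_ae (ae_of_all _ fun g => ?_)
      calc (inner ℝ (ψ g⁻¹ (f' (g • x))) (e x) : ℝ)
          = inner ℝ (ψ g (ψ g⁻¹ (f' (g • x)))) (ψ g (e x)) := ((ψ g).inner_map_map _ _).symm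
        _ = inner ℝ (f' (g • x)) (e (g • x)) := by rw [hψcomp, ← heq]
    have step2 : ∫ x, ∫ g, (inner ℝ (f' (g • x)) (e (g • x)) : ℝ) ∂lam ∂μ
        = ∫ p : X × G, (inner ℝ (f' (p.2 • p.1)) (e (p.2 • p.1)) : ℝ) ∂(μ.prod lam) :=
      (MeasureTheory.integral_prod _ hΦint).symm
    have step3 : ∫ p : X × G, (inner ℝ (f' (p.2 • p.1)) (e (p.2 • p.1)) : ℝ) ∂(μ.prod lam)
        = ∫ y, (inner ℝ (f' y) (e y) : ℝ) ∂μ := by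
      have h0 := integral_map (φ := fun p : X × G => p.2 • p.1)
        hTmeas.aemeasurable (by rw [hmapT]; exact hφaesm)
      rw [hmapT] at h0
      exact h0.symm
    rw [step1, step2, step3]
  -- Pythagoras
  have he2 : MemLp (fun x => Qavg lam ψ f' x - fstar x) 2 μ := hQ2.sub hfstar
  have heqv : ∀ (g : G) (x : X),
      Qavg lam ψ f' (g • x) - fstar (g • x) = ψ g (Qavg lam ψ f' x - fstar x) := by
    intro g x
    rw [hQeq g x, hfstarEquiv g x, map_sub]
  have hu2 : MemLp (fun x => f' x - Qavg lam ψ f' x) 2 μ := hf'2.sub hQ2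
  have hcross0 : ∫ x, (inner ℝ (f' x - Qavg lam ψ f' x)
      (Qavg lam ψ f' x - fstar x) : ℝ) ∂μ = 0 := by
    have hKe := hK _ he2 heqv
    have i1 : Integrable (fun x =>
        (inner ℝ (f' x) (Qavg lam ψ f' x - fstar x) : ℝ)) μ :=
      integrable_inner_of_memL2_s7 hf'2 he2
    have i2 : Integrable (fun x =>
        (inner ℝ (Qavg lam ψ f' x) (Qavg lam ψ f' x - fstar x) : ℝ)) μ :=
      integrable_inner_of_memL2_s7 hQ2 he2
    have hsub : ∀ x, (inner ℝ (f' x - Qavg lam ψ f' x) (Qavg lam ψ f' x - fstar x) : ℝ)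
        = inner ℝ (f' x) (Qavg lam ψ f' x - fstar x)
          - inner ℝ (Qavg lam ψ f' x) (Qavg lam ψ f' x - fstar x) :=
      fun x => inner_sub_left _ _ _
    simp_rw [hsub]
    rw [integral_sub i1 i2, hKe, sub_self]
  have hPyth : (∫ x, ‖fstar x - f' x‖ ^ 2 ∂μ) - ∫ x, ‖fstar x - Qavg lam ψ f' x‖ ^ 2 ∂μ
      = ∫ x, ‖f' x - Qavg lam ψ f' x‖ ^ 2 ∂μ := by
    have hexp : ∀ x, ‖fstar x - f' x‖ ^ 2
        = ‖f' x - Qavg lam ψ f' x‖ ^ 2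
          + 2 * (inner ℝ (f' x - Qavg lam ψ f' x) (Qavg lam ψ f' x - fstar x) : ℝ)
          + ‖Qavg lam ψ f' x - fstar x‖ ^ 2 := by
      intro x
      have h : fstar x - f' x
          = -((f' x - Qavg lam ψ f' x) + (Qavg lam ψ f' x - fstar x)) := by abel
      rw [h, norm_neg, norm_add_sq_real]
    have iu : Integrable (fun x => ‖f' x - Qavg lam ψ f' x‖ ^ 2) μ :=
      (memLp_two_iff_integrable_sq_norm hu2.1).1 hu2
    have iin : Integrable (fun x =>
        (inner ℝ (f' x - Qavg lam ψ f' x) (Qavg lam ψ f' x - fstar x) : ℝ)) μ :=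
      integrable_inner_of_memL2_s7 hu2 he2
    have ie : Integrable (fun x => ‖Qavg lam ψ f' x - fstar x‖ ^ 2) μ :=
      (memLp_two_iff_integrable_sq_norm he2.1).1 he2
    have iA : Integrable (fun x => ‖f' x - Qavg lam ψ f' x‖ ^ 2
        + 2 * (inner ℝ (f' x - Qavg lam ψ f' x) (Qavg lam ψ f' x - fstar x) : ℝ)) μ :=
      iu.add (iin.const_mul 2)
    have i2i : Integrable (fun x =>
        2 * (inner ℝ (f' x - Qavg lam ψ f' x) (Qavg lam ψ f' x - fstar x) : ℝ)) μ :=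
      iin.const_mul 2
    have hns : ∀ x, ‖fstar x - Qavg lam ψ f' x‖ = ‖Qavg lam ψ f' x - fstar x‖ :=
      fun x => norm_sub_rev _ _
    simp_rw [hexp, hns]
    rw [integral_add iA ie, integral_add iu i2i, MeasureTheory.integral_const_mul, hcross0,
      mul_zero, add_zero]
    ring
  -- the P-side expansion
  have hPS : ∀ v : X → EuclideanSpace ℝ (Fin k), Measurable v → MemLp v 2 μ →
      ∫ ω, ‖v (Xr ω) + ξ ω‖ ^ 2 ∂P = (∫ x, ‖v x‖ ^ 2 ∂μ) + ∫ ω, ‖ξ ω‖ ^ 2 ∂P := by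
    intro v hvm hv2
    have hvsm : StronglyMeasurable v := hvm.stronglyMeasurable
    have hv2' : MemLp v 2 (P.map Xr) := by rwa [hXrlaw]
    have hW2 : MemLp (fun ω => v (Xr ω)) 2 P :=
      (memLp_map_measure_iff (hvsm.aestronglyMeasurable) hXrm.aemeasurable).1 hv2'
    have hcross : ∫ ω, (inner ℝ (v (Xr ω)) (ξ ω) : ℝ) ∂P = 0 := by
      have hXi0 : ∀ i : Fin k, ∫ ω, ξ ω i ∂P = 0 := by
        intro i
        have hint : Integrable ξ P := hξ2.integrable one_le_two
        have h := integral_inner (𝕜 := ℝ) hint (EuclideanSpace.single i (1:ℝ))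
        rw [hξmean, inner_zero_right] at h
        simpa [EuclideanSpace.inner_single_left] using h
      have hterm : ∀ i : Fin k, ∫ ω, v (Xr ω) i * ξ ω i ∂P = 0 := by
        intro i
        have hWim : Measurable (fun ω => v (Xr ω) i) :=
          ((measurable_pi_apply i).comp (WithLp.measurable_ofLp 2 _)).comp (hvm.comp hXrm)
        have hWi2 : MemLp (fun ω => v (Xr ω) i) 2 P := by
          refine hW2.of_le hWim.aestronglyMeasurable (ae_of_all _ fun ω => ?_)
          rw [Real.norm_eq_abs]
          exact coord_abs_le_norm (v (Xr ω)) i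
        have hXi2 : MemLp (fun ω => ξ ω i) 2 P := by
          refine hξ2.of_le (((measurable_pi_apply i).comp (WithLp.measurable_ofLp 2 _)).comp hξm).aestronglyMeasurable
            (ae_of_all _ fun ω => ?_)
          rw [Real.norm_eq_abs]
          exact coord_abs_le_norm (ξ ω) i
        have hWiXi : IndepFun (fun ω => v (Xr ω) i) (fun ω => ξ ω i) P :=
          hindep.comp (((measurable_pi_apply i).comp (WithLp.measurable_ofLp 2 _)).comp hvm) ((measurable_pi_apply i).comp (WithLp.measurable_ofLp 2 _))
        have hmul : ∫ ω, v (Xr ω) i * ξ ω i ∂P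
            = (∫ ω, v (Xr ω) i ∂P) * ∫ ω, ξ ω i ∂P :=
          hWiXi.integral_mul_eq_mul_integral (hWi2.integrable one_le_two).aestronglyMeasurable
            (hXi2.integrable one_le_two).aestronglyMeasurable
        rw [hmul, hXi0 i, mul_zero]
      have hrw : ∀ ω, (inner ℝ (v (Xr ω)) (ξ ω) : ℝ) = ∑ i, v (Xr ω) i * ξ ω i := by
        intro ω
        simp [PiLp.inner_apply, RCLike.inner_apply, starRingEnd_apply, mul_comm]
      simp_rw [hrw]
      rw [integral_finset_sum]
      · exact Finset.sum_eq_zero fun i _ => hterm i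
      · intro i _
        have hWi2 : MemLp (fun ω => v (Xr ω) i) 2 P := by
          refine hW2.of_le (((measurable_pi_apply i).comp (WithLp.measurable_ofLp 2 _)).comp (hvm.comp hXrm)).aestronglyMeasurable
            (ae_of_all _ fun ω => ?_)
          rw [Real.norm_eq_abs]
          exact coord_abs_le_norm (v (Xr ω)) i
        have hXi2 : MemLp (fun ω => ξ ω i) 2 P := by
          refine hξ2.of_le (((measurable_pi_apply i).comp (WithLp.measurable_ofLp 2 _)).comp hξm).aestronglyMeasurable
            (ae_of_all _ fun ω => ?_)
          rw [Real.norm_eq_abs]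
          exact coord_abs_le_norm (ξ ω) i
        have : Integrable ((fun ω => v (Xr ω) i) * fun ω => ξ ω i) P :=
          ((hindep.comp (((measurable_pi_apply i).comp (WithLp.measurable_ofLp 2 _)).comp hvm)
            ((measurable_pi_apply i).comp (WithLp.measurable_ofLp 2 _))).integrable_mul (hWi2.integrable one_le_two)
            (hXi2.integrable one_le_two))
        exact this
    have hexp : ∀ ω, ‖v (Xr ω) + ξ ω‖ ^ 2
        = ‖v (Xr ω)‖ ^ 2 + 2 * (inner ℝ (v (Xr ω)) (ξ ω) : ℝ) + ‖ξ ω‖ ^ 2 :=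
      fun ω => norm_add_sq_real _ _
    have iW2 : Integrable (fun ω => ‖v (Xr ω)‖ ^ 2) P :=
      (memLp_two_iff_integrable_sq_norm hW2.aestronglyMeasurable).1 hW2
    have iInner : Integrable (fun ω => (inner ℝ (v (Xr ω)) (ξ ω) : ℝ)) P :=
      integrable_inner_of_memL2_s7 hW2 hξ2
    have iXi2 : Integrable (fun ω => ‖ξ ω‖ ^ 2) P :=
      (memLp_two_iff_integrable_sq_norm hξ2.aestronglyMeasurable).1 hξ2
    have iA : Integrable (fun ω => ‖v (Xr ω)‖ ^ 2 + 2 * (inner ℝ (v (Xr ω)) (ξ ω) : ℝ)) P :=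
      iW2.add (iInner.const_mul 2)
    have i2i : Integrable (fun ω => 2 * (inner ℝ (v (Xr ω)) (ξ ω) : ℝ)) P := iInner.const_mul 2
    simp_rw [hexp]
    rw [integral_add iA iXi2, integral_add iW2 i2i, MeasureTheory.integral_const_mul, hcross,
      mul_zero, add_zero]
    congr 1
    have h0 : ∫ x, ‖v x‖ ^ 2 ∂(P.map Xr) = ∫ ω, ‖v (Xr ω)‖ ^ 2 ∂P :=
      integral_map hXrm.aemeasurable
        (by rw [hXrlaw]; exact (hvsm.norm.pow 2).aestronglyMeasurable)
    rw [hXrlaw] at h0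
    exact h0.symm
  -- a.e. equality of Qavg f and Qavg f'
  have hQae : Qavg lam ψ f =ᵐ[μ] Qavg lam ψ f' := by
    have hff'' : f =ᵐ[(μ.prod lam).map (fun p : X × G => p.2 • p.1)] f' := by
      rw [hmapT]; exact hff'
    have hprodae : ∀ᵐ p ∂(μ.prod lam), f (p.2 • p.1) = f' (p.2 • p.1) := by
      have h0 := ae_eq_comp (f := fun p : X × G => p.2 • p.1)
        hTmeas.aemeasurable hff''
      exact h0
    have hae2 : ∀ᵐ x ∂μ, ∀ᵐ g ∂lam, f (g • x) = f' (g • x) :=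
      Measure.ae_ae_of_ae_prod hprodae
    filter_upwards [hae2] with x hx
    show ∫ g, ψ g⁻¹ (f (g • x)) ∂lam = ∫ g, ψ g⁻¹ (f' (g • x)) ∂lam
    refine integral_congr_ae ?_
    filter_upwards [hx] with g hg
    rw [hg]
  -- transfer a.e. equalities along Xr
  have hfXr : (fun ω => f (Xr ω)) =ᵐ[P] fun ω => f' (Xr ω) :=
    ae_eq_comp hXrm.aemeasurable (by rw [hXrlaw]; exact hff')
  have hfsXr : (fun ω => fstar (Xr ω)) =ᵐ[P] fun ω => fs' (Xr ω) :=
    ae_eq_comp hXrm.aemeasurable (by rw [hXrlaw]; exact hfsf')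
  have hQae' : Qavg lam ψ f =ᵐ[P.map Xr] Qavg lam ψ f' := by rw [hXrlaw]; exact hQae
  have hQXr : (fun ω => Qavg lam ψ f (Xr ω)) =ᵐ[P] fun ω => Qavg lam ψ f' (Xr ω) :=
    ae_eq_comp hXrm.aemeasurable hQae'
  -- the two P-integrals
  have hv1m : Measurable (fun x => fs' x - f' x) := hfs'meas.sub hf'meas
  have hv12 : MemLp (fun x => fs' x - f' x) 2 μ := hfs'2.sub hf'2
  have hv2m : Measurable (fun x => fs' x - Qavg lam ψ f' x) := hfs'meas.sub hQsm.measurable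
  have hv22 : MemLp (fun x => fs' x - Qavg lam ψ f' x) 2 μ := hfs'2.sub hQ2
  have hPS1 : ∫ ω, ‖fs' (Xr ω) - f' (Xr ω) + ξ ω‖ ^ 2 ∂P
      = (∫ x, ‖fs' x - f' x‖ ^ 2 ∂μ) + ∫ ω, ‖ξ ω‖ ^ 2 ∂P := hPS (fun x => fs' x - f' x) hv1m hv12
  have hPS2 : ∫ ω, ‖fs' (Xr ω) - Qavg lam ψ f' (Xr ω) + ξ ω‖ ^ 2 ∂P
      = (∫ x, ‖fs' x - Qavg lam ψ f' x‖ ^ 2 ∂μ) + ∫ ω, ‖ξ ω‖ ^ 2 ∂P := hPS (fun x => fs' x - Qavg lam ψ f' x) hv2m hv22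
  have hL1 : ∫ ω, ‖fstar (Xr ω) + ξ ω - f (Xr ω)‖ ^ 2 ∂P
      = ∫ ω, ‖fs' (Xr ω) - f' (Xr ω) + ξ ω‖ ^ 2 ∂P := by
    refine integral_congr_ae ?_
    filter_upwards [hfXr, hfsXr] with ω h1 h2
    rw [h1, h2, show fs' (Xr ω) + ξ ω - f' (Xr ω) = fs' (Xr ω) - f' (Xr ω) + ξ ω from by abel]
  have hL2 : ∫ ω, ‖fstar (Xr ω) + ξ ω - Qavg lam ψ f (Xr ω)‖ ^ 2 ∂P
      = ∫ ω, ‖fs' (Xr ω) - Qavg lam ψ f' (Xr ω) + ξ ω‖ ^ 2 ∂P := by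
    refine integral_congr_ae ?_
    filter_upwards [hQXr, hfsXr] with ω h1 h2
    rw [h1, h2, show fs' (Xr ω) + ξ ω - Qavg lam ψ f' (Xr ω)
      = fs' (Xr ω) - Qavg lam ψ f' (Xr ω) + ξ ω from by abel]
  -- μ-side conversions
  have hμ1 : ∫ x, ‖fs' x - f' x‖ ^ 2 ∂μ = ∫ x, ‖fstar x - f' x‖ ^ 2 ∂μ := by
    refine integral_congr_ae ?_
    filter_upwards [hfsf'] with x h
    rw [h]
  have hμ2 : ∫ x, ‖fs' x - Qavg lam ψ f' x‖ ^ 2 ∂μ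
      = ∫ x, ‖fstar x - Qavg lam ψ f' x‖ ^ 2 ∂μ := by
    refine integral_congr_ae ?_
    filter_upwards [hfsf'] with x h
    rw [h]
  have hRHS : ∫ x, ‖f x - Qavg lam ψ f x‖ ^ 2 ∂μ = ∫ x, ‖f' x - Qavg lam ψ f' x‖ ^ 2 ∂μ := by
    refine integral_congr_ae ?_
    filter_upwards [hff', hQae] with x h1 h2
    rw [h1, h2]
  rw [hL1, hL2, hPS1, hPS2, hμ1, hμ2, hRHS, ← hPyth]
  ring
end

section
/- Let X ∼ μ where μ is a 𝒢-invariant distribution on ℝᵈ with Σ = E[XXᵀ] finite, and let ξ be a random element of ℝᵏ independent of X with E[ξ] = 0 and finite variance. Set Y = f_Θ(X) + ξ where f_Θ(x) = Θᵀx is 𝒢-equivariant. Then for any W ∈ ℝ^{d×k}, the generalisation gap satisfies Δ(f_W, f_{W̄}) := E[‖Y − f_W(X)‖₂²] − E[‖Y − f_{W̄}(X)‖₂²] = ‖Σ^{1/2} W^⊥‖_F², where W̄ = Ψ_𝒢(W) and W^⊥ = W − Ψ_𝒢(W). -/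
open Matrix MeasureTheory ProbabilityTheory
set_option linter.unusedSectionVars false
set_option linter.unusedVariables false
set_option maxHeartbeats 1000000

/-- The intertwining average `Ψ_𝒢(W) = ∫_𝒢 φ(g) W ψ(g⁻¹) dλ(g)` (defined entrywise). -/
noncomputable def PsiG {d k : ℕ} {G : Type*} [Group G] [MeasurableSpace G]
    (lam : Measure G)
    (φ : G →* Matrix.orthogonalGroup (Fin d) ℝ)
    (ψ : G →* Matrix.orthogonalGroup (Fin k) ℝ)
    (W : Matrix (Fin d) (Fin k) ℝ) : Matrix (Fin d) (Fin k) ℝ :=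
  Matrix.of fun i j =>
    ∫ g, ((φ g : Matrix (Fin d) (Fin d) ℝ) * W * (ψ g⁻¹ : Matrix (Fin k) (Fin k) ℝ)) i j ∂lam

open scoped ComplexOrder in
/-- The positive semidefinite square root of a positive semidefinite matrix (the definition
`Matrix.PosSemidef.sqrt` of the older Mathlib, since removed). -/
noncomputable def Matrix.PosSemidef.sqrt {n 𝕜 : Type*} [Fintype n] [DecidableEq n] [RCLike 𝕜]
    {A : Matrix n n 𝕜} (hA : A.PosSemidef) : Matrix n n 𝕜 :=
  (hA.1.eigenvectorUnitary : Matrix n n 𝕜) * diagonal ((↑) ∘ (fun x : ℝ => √x) ∘ hA.1.eigenvalues) *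
    (star hA.1.eigenvectorUnitary : Matrix n n 𝕜)

open scoped ComplexOrder in
lemma Matrix.PosSemidef.sqrt_mul_self {n 𝕜 : Type*} [Fintype n] [DecidableEq n] [RCLike 𝕜]
    {A : Matrix n n 𝕜} (hA : A.PosSemidef) : hA.sqrt * hA.sqrt = A := by
  have hU : (star (hA.1.eigenvectorUnitary : Matrix n n 𝕜)) * (hA.1.eigenvectorUnitary : Matrix n n 𝕜) = 1 :=
    Matrix.UnitaryGroup.star_mul_self _
  have hDD : diagonal ((↑) ∘ (fun x : ℝ => √x) ∘ hA.1.eigenvalues) *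
      diagonal ((↑) ∘ (fun x : ℝ => √x) ∘ hA.1.eigenvalues) =
      (diagonal (RCLike.ofReal ∘ hA.1.eigenvalues) : Matrix n n 𝕜) := by
    rw [diagonal_mul_diagonal]
    congr 1
    funext i
    simp [← RCLike.ofReal_mul, Real.mul_self_sqrt (hA.eigenvalues_nonneg i)]
  conv_rhs => rw [hA.1.spectral_theorem]
  rw [Unitary.conjStarAlgAut_apply, ← hDD, Matrix.PosSemidef.sqrt]
  simp only [Matrix.mul_assoc, Unitary.coe_star]
  rw [← Matrix.mul_assoc (star (hA.1.eigenvectorUnitary : Matrix n n 𝕜)) _ _, hU, Matrix.one_mul]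

open scoped ComplexOrder in
lemma Matrix.PosSemidef.sqrt_isHermitian {n 𝕜 : Type*} [Fintype n] [DecidableEq n] [RCLike 𝕜]
    {A : Matrix n n 𝕜} (hA : A.PosSemidef) : hA.sqrt.IsHermitian := by
  unfold Matrix.IsHermitian Matrix.PosSemidef.sqrt
  simp [Matrix.conjTranspose_mul, Matrix.diagonal_conjTranspose, Matrix.mul_assoc]
  have hstar : star (RCLike.ofReal ∘ (fun x : ℝ => √x) ∘ hA.1.eigenvalues : n → 𝕜) =
      RCLike.ofReal ∘ (fun x : ℝ => √x) ∘ hA.1.eigenvalues := by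
    funext i; simp
  rw [← Matrix.star_eq_conjTranspose, ← Matrix.star_eq_conjTranspose, star_star, hstar]

section Aux

variable {d k n : ℕ} {G : Type*} [Group G] [MeasurableSpace G]

/-- coercion of inverse is transpose -/
lemma coe_inv_orth (ρ : G →* Matrix.orthogonalGroup (Fin n) ℝ) (g : G) :
    ((ρ g⁻¹ : Matrix (Fin n) (Fin n) ℝ)) = (ρ g : Matrix (Fin n) (Fin n) ℝ)ᵀ := by
  rw [map_inv, Matrix.UnitaryGroup.inv_val, Matrix.star_eq_conjTranspose,
    Matrix.conjTranspose_eq_transpose_of_trivial]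

lemma orth_tmul (U : Matrix.orthogonalGroup (Fin n) ℝ) :
    (↑U : Matrix (Fin n) (Fin n) ℝ)ᵀ * (↑U : Matrix (Fin n) (Fin n) ℝ) = 1 := by
  have := Matrix.UnitaryGroup.star_mul_self U
  rwa [Matrix.star_eq_conjTranspose, Matrix.conjTranspose_eq_transpose_of_trivial] at this

lemma orth_entry_abs_le (U : Matrix.orthogonalGroup (Fin n) ℝ) (i j : Fin n) :
    |(↑U : Matrix (Fin n) (Fin n) ℝ) i j| ≤ 1 := by
  have h := orth_tmul U
  have h2 : ∑ a, ((↑U : Matrix (Fin n) (Fin n) ℝ) a j)^2 = 1 := by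
    have := congrFun (congrFun h j) j
    simpa [Matrix.mul_apply, Matrix.transpose_apply, sq, Matrix.one_apply] using this
  have hle : ((↑U : Matrix (Fin n) (Fin n) ℝ) i j)^2 ≤ 1 := by
    rw [← h2]
    exact Finset.single_le_sum
      (f := fun a => ((↑U : Matrix (Fin n) (Fin n) ℝ) a j)^2)
      (fun a _ => sq_nonneg _) (Finset.mem_univ i)
  nlinarith [abs_nonneg ((↑U : Matrix (Fin n) (Fin n) ℝ) i j),
    sq_abs ((↑U : Matrix (Fin n) (Fin n) ℝ) i j)]

lemma mat_ext_of_mulVec {A B : Matrix (Fin d) (Fin k) ℝ} (h : ∀ x, A *ᵥ x = B *ᵥ x) :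
    A = B := by
  ext i j
  have := congrFun (h (Pi.single j 1)) i
  simpa [Matrix.mulVec_single] using this

lemma trace_tmul (A B : Matrix (Fin d) (Fin k) ℝ) :
    (Aᵀ * B).trace = ∑ j, ∑ i, A i j * B i j := by
  simp [Matrix.trace, Matrix.diag, Matrix.mul_apply]

variable (φ : G →* Matrix.orthogonalGroup (Fin d) ℝ)
    (ψ : G →* Matrix.orthogonalGroup (Fin k) ℝ)

lemma entry_eq (W : Matrix (Fin d) (Fin k) ℝ) (i : Fin d) (j : Fin k) :
    (fun g => ((φ g : Matrix (Fin d) (Fin d) ℝ) * W * (ψ g⁻¹ : Matrix (Fin k) (Fin k) ℝ)) i j)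
      = fun g => ∑ b, (∑ a, (φ g : Matrix (Fin d) (Fin d) ℝ) i a * W a b)
          * (ψ g : Matrix (Fin k) (Fin k) ℝ) j b := by
  funext g
  rw [coe_inv_orth ψ g]
  simp [Matrix.mul_apply, Matrix.transpose_apply]

lemma entry_meas (hφ : ∀ i j, Measurable fun g => (φ g : Matrix (Fin d) (Fin d) ℝ) i j)
    (hψ : ∀ i j, Measurable fun g => (ψ g : Matrix (Fin k) (Fin k) ℝ) i j)
    (W : Matrix (Fin d) (Fin k) ℝ) (i : Fin d) (j : Fin k) :
    Measurable (fun g =>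
      ((φ g : Matrix (Fin d) (Fin d) ℝ) * W * (ψ g⁻¹ : Matrix (Fin k) (Fin k) ℝ)) i j) := by
  rw [entry_eq]
  exact Finset.measurable_sum _ fun b _ =>
    ((Finset.measurable_sum _ fun a _ => (hφ i a).mul_const _).mul (hψ j b))

lemma entry_bound (W : Matrix (Fin d) (Fin k) ℝ) (i : Fin d) (j : Fin k) (g : G) :
    |((φ g : Matrix (Fin d) (Fin d) ℝ) * W * (ψ g⁻¹ : Matrix (Fin k) (Fin k) ℝ)) i j|
      ≤ ∑ b, ∑ a, |W a b| := by
  have he := congrFun (entry_eq φ ψ W i j) g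
  rw [he]
  calc |∑ b, (∑ a, (φ g : Matrix (Fin d) (Fin d) ℝ) i a * W a b)
          * (ψ g : Matrix (Fin k) (Fin k) ℝ) j b|
      ≤ ∑ b, |(∑ a, (φ g : Matrix (Fin d) (Fin d) ℝ) i a * W a b)
          * (ψ g : Matrix (Fin k) (Fin k) ℝ) j b| := Finset.abs_sum_le_sum_abs _ _
    _ ≤ ∑ b, ∑ a, |W a b| := by
        refine Finset.sum_le_sum fun b _ => ?_
        rw [abs_mul]
        calc |∑ a, (φ g : Matrix (Fin d) (Fin d) ℝ) i a * W a b|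
              * |(ψ g : Matrix (Fin k) (Fin k) ℝ) j b|
            ≤ |∑ a, (φ g : Matrix (Fin d) (Fin d) ℝ) i a * W a b| * 1 :=
              mul_le_mul_of_nonneg_left (orth_entry_abs_le _ _ _) (abs_nonneg _)
          _ = |∑ a, (φ g : Matrix (Fin d) (Fin d) ℝ) i a * W a b| := mul_one _
          _ ≤ ∑ a, |(φ g : Matrix (Fin d) (Fin d) ℝ) i a * W a b| :=
              Finset.abs_sum_le_sum_abs _ _
          _ ≤ ∑ a, |W a b| := by
              refine Finset.sum_le_sum fun a _ => ?_
              rw [abs_mul]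
              calc |(φ g : Matrix (Fin d) (Fin d) ℝ) i a| * |W a b|
                  ≤ 1 * |W a b| :=
                    mul_le_mul_of_nonneg_right (orth_entry_abs_le _ _ _) (abs_nonneg _)
                _ = |W a b| := one_mul _

lemma entry_integrable (lam : Measure G) [IsProbabilityMeasure lam]
    (hφ : ∀ i j, Measurable fun g => (φ g : Matrix (Fin d) (Fin d) ℝ) i j)
    (hψ : ∀ i j, Measurable fun g => (ψ g : Matrix (Fin k) (Fin k) ℝ) i j)
    (W : Matrix (Fin d) (Fin k) ℝ) (i : Fin d) (j : Fin k) :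
    Integrable (fun g =>
      ((φ g : Matrix (Fin d) (Fin d) ℝ) * W * (ψ g⁻¹ : Matrix (Fin k) (Fin k) ℝ)) i j) lam := by
  refine Integrable.mono' (integrable_const (∑ b, ∑ a, |W a b|))
    (entry_meas φ ψ hφ hψ W i j).aestronglyMeasurable ?_
  exact Filter.Eventually.of_forall fun g => by
    simpa using entry_bound φ ψ W i j g

end Aux

section Aux2

variable {d k : ℕ} {G : Type*} [Group G] [MeasurableSpace G]

-- measurability of mulVec
lemma meas_mulVec (M : Matrix (Fin d) (Fin d) ℝ) :
    Measurable (fun x : Fin d → ℝ => M *ᵥ x) := by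
  refine measurable_pi_iff.mpr fun i => ?_
  simp only [Matrix.mulVec, dotProduct]
  exact Finset.measurable_sum _ fun a _ => (measurable_pi_apply a).const_mul _

-- Sigma is phi-conjugation-invariant, hence commutes
lemma sig_comm (φ : G →* Matrix.orthogonalGroup (Fin d) ℝ)
    (μ : Measure (Fin d → ℝ)) [IsProbabilityMeasure μ]
    (hμinv : ∀ g : G, μ.map (fun x => (φ g : Matrix (Fin d) (Fin d) ℝ) *ᵥ x) = μ)
    (hmom : ∀ i j : Fin d, Integrable (fun x => x i * x j) μ)
    (Sig : Matrix (Fin d) (Fin d) ℝ)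
    (hSig : ∀ i j : Fin d, Sig i j = ∫ x, x i * x j ∂μ) (g : G) :
    (φ g : Matrix (Fin d) (Fin d) ℝ) * Sig = Sig * (φ g : Matrix (Fin d) (Fin d) ℝ) := by
  set U : Matrix (Fin d) (Fin d) ℝ := (φ g : Matrix (Fin d) (Fin d) ℝ) with hU
  have hconj : U * Sig * Uᵀ = Sig := by
    ext i i'
    have lhs_eq : (U * Sig * Uᵀ) i i'
        = ∫ x, (U *ᵥ x) i * (U *ᵥ x) i' ∂μ := by
      calc (U * Sig * Uᵀ) i i'
          = ∑ b, ∑ a, U i a * Sig a b * U i' b := by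
            simp [Matrix.mul_apply, Matrix.transpose_apply, Finset.sum_mul]
        _ = ∑ b, ∑ a, ∫ x, (U i a * U i' b) * (x a * x b) ∂μ := by
            refine Finset.sum_congr rfl fun b _ => Finset.sum_congr rfl fun a _ => ?_
            have hml : ∫ x, (U i a * U i' b) * (x a * x b) ∂μ
                = (U i a * U i' b) * ∫ x, x a * x b ∂μ := integral_const_mul _ _
            rw [hSig, hml]
            ring
        _ = ∑ b, ∫ x, ∑ a, (U i a * U i' b) * (x a * x b) ∂μ := by
            refine Finset.sum_congr rfl fun b _ => ?_
            rw [integral_finset_sum _ fun a _ => (hmom a b).const_mul _]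
        _ = ∫ x, ∑ b, ∑ a, (U i a * U i' b) * (x a * x b) ∂μ := by
            rw [integral_finset_sum _ fun b _ =>
              integrable_finset_sum _ fun a _ => (hmom a b).const_mul _]
        _ = ∫ x, (U *ᵥ x) i * (U *ᵥ x) i' ∂μ := by
            refine integral_congr_ae (Filter.Eventually.of_forall fun x => ?_)
            simp only [Matrix.mulVec, dotProduct]
            rw [Finset.sum_mul_sum, Finset.sum_comm]
            exact Finset.sum_congr rfl fun b _ => Finset.sum_congr rfl fun a _ => by ring
    have rhs_eq : Sig i i' = ∫ x, (U *ᵥ x) i * (U *ᵥ x) i' ∂μ := by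
      have hmap : ∫ x, x i * x i' ∂(μ.map (fun x => (φ g : Matrix (Fin d) (Fin d) ℝ) *ᵥ x))
          = ∫ x, ((φ g : Matrix (Fin d) (Fin d) ℝ) *ᵥ x) i
              * ((φ g : Matrix (Fin d) (Fin d) ℝ) *ᵥ x) i' ∂μ :=
        integral_map (meas_mulVec _).aemeasurable
          (((measurable_pi_apply i).mul (measurable_pi_apply i')).aestronglyMeasurable)
      rw [hSig, hU, ← hmap, hμinv g]
    rw [lhs_eq, ← rhs_eq]
  have horth : Uᵀ * U = 1 := orth_tmul (φ g)
  calc U * Sig = U * Sig * 1 := by rw [mul_one]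
    _ = U * Sig * (Uᵀ * U) := by rw [horth]
    _ = (U * Sig * Uᵀ) * U := by rw [mul_assoc (U * Sig)]
    _ = Sig * U := by rw [hconj]
end Aux2

section Aux3
variable {d k : ℕ} {G : Type*} [Group G] [MeasurableSpace G]
variable (φ : G →* Matrix.orthogonalGroup (Fin d) ℝ)
variable (ψ : G →* Matrix.orthogonalGroup (Fin k) ℝ)

lemma coe_mul_inv_self (g : G) :
    (ψ g : Matrix (Fin k) (Fin k) ℝ) * (ψ g⁻¹ : Matrix (Fin k) (Fin k) ℝ) = 1 := by
  have : ψ g * ψ g⁻¹ = 1 := by rw [← _root_.map_mul, mul_inv_cancel, _root_.map_one]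
  calc (ψ g : Matrix (Fin k) (Fin k) ℝ) * (ψ g⁻¹ : Matrix (Fin k) (Fin k) ℝ)
      = ((ψ g * ψ g⁻¹ : Matrix.orthogonalGroup (Fin k) ℝ) : Matrix (Fin k) (Fin k) ℝ) := rfl
    _ = 1 := by rw [this]; rfl

/-- equivariance in matrix-fixed-point form -/
lemma theta_fixed (Θ : Matrix (Fin d) (Fin k) ℝ)
    (hequiv : ∀ (g : G) (x : Fin d → ℝ),
      Θᵀ *ᵥ ((φ g : Matrix (Fin d) (Fin d) ℝ) *ᵥ x)
        = (ψ g : Matrix (Fin k) (Fin k) ℝ) *ᵥ (Θᵀ *ᵥ x)) (g : G) :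
    (φ g : Matrix (Fin d) (Fin d) ℝ) * Θ * (ψ g⁻¹ : Matrix (Fin k) (Fin k) ℝ) = Θ := by
  have h1 : ∀ h : G, Θᵀ * (φ h : Matrix (Fin d) (Fin d) ℝ)
      = (ψ h : Matrix (Fin k) (Fin k) ℝ) * Θᵀ := by
    intro h
    refine mat_ext_of_mulVec fun x => ?_
    rw [← Matrix.mulVec_mulVec, ← Matrix.mulVec_mulVec]
    exact hequiv h x
  have h2 : ∀ h : G, (φ h : Matrix (Fin d) (Fin d) ℝ)ᵀ * Θ
      = Θ * (ψ h : Matrix (Fin k) (Fin k) ℝ)ᵀ := by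
    intro h
    have := congrArg Matrix.transpose (h1 h)
    simpa [Matrix.transpose_mul] using this
  have h3 : (φ g : Matrix (Fin d) (Fin d) ℝ) * Θ
      = Θ * (ψ g : Matrix (Fin k) (Fin k) ℝ) := by
    have := h2 g⁻¹
    rw [coe_inv_orth φ, coe_inv_orth ψ, Matrix.transpose_transpose,
      Matrix.transpose_transpose] at this
    exact this
  rw [h3, Matrix.mul_assoc, coe_mul_inv_self ψ g, Matrix.mul_one]

/-- the intertwining average is pointwise `𝒢`-fixed -/
lemma psiG_fixed (lam : Measure G) [IsProbabilityMeasure lam]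
    (hlinv : ∀ g : G, lam.map (fun h => g * h) = lam)
    (hφ : ∀ i j, Measurable fun g => (φ g : Matrix (Fin d) (Fin d) ℝ) i j)
    (hψ : ∀ i j, Measurable fun g => (ψ g : Matrix (Fin k) (Fin k) ℝ) i j)
    (W : Matrix (Fin d) (Fin k) ℝ) (h : G) :
    (φ h : Matrix (Fin d) (Fin d) ℝ) * (PsiG lam φ ψ W) * (ψ h⁻¹ : Matrix (Fin k) (Fin k) ℝ)
      = PsiG lam φ ψ W := by
  have hmeas_mul : AEMeasurable (fun x => h * x) lam := by
    by_contra hc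
    have h0 := hlinv h
    rw [Measure.map_of_not_aemeasurable hc] at h0
    have : (0 : Measure G) Set.univ = lam Set.univ := by rw [h0]
    simp [measure_univ] at this
  set F : G → Matrix (Fin d) (Fin k) ℝ :=
    fun g => (φ g : Matrix (Fin d) (Fin d) ℝ) * W * (ψ g⁻¹ : Matrix (Fin k) (Fin k) ℝ) with hF
  have hcomp : ∀ g : G, (φ h : Matrix (Fin d) (Fin d) ℝ) * F g
      * (ψ h⁻¹ : Matrix (Fin k) (Fin k) ℝ) = F (h * g) := by
    intro g
    have e1 : (φ (h*g) : Matrix (Fin d) (Fin d) ℝ)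
        = (φ h : Matrix (Fin d) (Fin d) ℝ) * (φ g : Matrix (Fin d) (Fin d) ℝ) := by
      rw [_root_.map_mul]; rfl
    have e2 : (ψ (h*g)⁻¹ : Matrix (Fin k) (Fin k) ℝ)
        = (ψ g⁻¹ : Matrix (Fin k) (Fin k) ℝ) * (ψ h⁻¹ : Matrix (Fin k) (Fin k) ℝ) := by
      rw [_root_.mul_inv_rev, _root_.map_mul]; rfl
    rw [hF]
    simp only []
    rw [e1, e2]
    simp [Matrix.mul_assoc]
  ext i j
  have lhs_eq : ((φ h : Matrix (Fin d) (Fin d) ℝ) * (PsiG lam φ ψ W)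
      * (ψ h⁻¹ : Matrix (Fin k) (Fin k) ℝ)) i j
      = ∫ g, ((φ h : Matrix (Fin d) (Fin d) ℝ) * F g
          * (ψ h⁻¹ : Matrix (Fin k) (Fin k) ℝ)) i j ∂lam := by
    calc ((φ h : Matrix (Fin d) (Fin d) ℝ) * (PsiG lam φ ψ W)
        * (ψ h⁻¹ : Matrix (Fin k) (Fin k) ℝ)) i j
        = ∑ b, ∑ a, ((φ h : Matrix (Fin d) (Fin d) ℝ) i a
            * (ψ h⁻¹ : Matrix (Fin k) (Fin k) ℝ) b j) * ∫ g, F g a b ∂lam := by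
          simp only [Matrix.mul_apply, Finset.sum_mul]
          refine Finset.sum_congr rfl fun b _ => Finset.sum_congr rfl fun a _ => ?_
          have : (PsiG lam φ ψ W) a b = ∫ g, F g a b ∂lam := rfl
          rw [this]; ring
      _ = ∑ b, ∑ a, ∫ g, ((φ h : Matrix (Fin d) (Fin d) ℝ) i a
            * (ψ h⁻¹ : Matrix (Fin k) (Fin k) ℝ) b j) * F g a b ∂lam := by
          refine Finset.sum_congr rfl fun b _ => Finset.sum_congr rfl fun a _ => ?_
          rw [integral_const_mul]
      _ = ∑ b, ∫ g, ∑ a, ((φ h : Matrix (Fin d) (Fin d) ℝ) i a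
            * (ψ h⁻¹ : Matrix (Fin k) (Fin k) ℝ) b j) * F g a b ∂lam := by
          refine Finset.sum_congr rfl fun b _ => ?_
          exact (integral_finset_sum _ fun a _ =>
            (entry_integrable φ ψ lam hφ hψ W a b).const_mul _).symm
      _ = ∫ g, ∑ b, ∑ a, ((φ h : Matrix (Fin d) (Fin d) ℝ) i a
            * (ψ h⁻¹ : Matrix (Fin k) (Fin k) ℝ) b j) * F g a b ∂lam :=
          (integral_finset_sum _ fun b _ => integrable_finset_sum _ fun a _ =>
            (entry_integrable φ ψ lam hφ hψ W a b).const_mul _).symm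
      _ = ∫ g, ((φ h : Matrix (Fin d) (Fin d) ℝ) * F g
            * (ψ h⁻¹ : Matrix (Fin k) (Fin k) ℝ)) i j ∂lam := by
          refine integral_congr_ae (Filter.Eventually.of_forall fun g => ?_)
          simp only [Matrix.mul_apply, Finset.sum_mul]
          exact (Finset.sum_congr rfl fun b _ => Finset.sum_congr rfl fun a _ => by ring).symm
  rw [lhs_eq]
  have step2 : ∫ g, ((φ h : Matrix (Fin d) (Fin d) ℝ) * F g
      * (ψ h⁻¹ : Matrix (Fin k) (Fin k) ℝ)) i j ∂lam = ∫ g, F (h * g) i j ∂lam := by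
    refine integral_congr_ae (Filter.Eventually.of_forall fun g => ?_)
    exact congrArg (fun M : Matrix (Fin d) (Fin k) ℝ => M i j) (hcomp g)
  rw [step2]
  have step3 : ∫ g, F (h * g) i j ∂lam = ∫ g, F g i j ∂lam := by
    have := integral_map (μ := lam) hmeas_mul
      (f := fun g => F g i j) (entry_meas φ ψ hφ hψ W i j).aestronglyMeasurable
    rw [hlinv h] at this
    exact this.symm
  rw [step3]
  rfl

/-- KEY: averaging is trace-orthogonal-compatible -/
lemma key_trace (lam : Measure G) [IsProbabilityMeasure lam]
    (hφ : ∀ i j, Measurable fun g => (φ g : Matrix (Fin d) (Fin d) ℝ) i j)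
    (hψ : ∀ i j, Measurable fun g => (ψ g : Matrix (Fin k) (Fin k) ℝ) i j)
    (Sig : Matrix (Fin d) (Fin d) ℝ)
    (hcomm : ∀ g : G, (φ g : Matrix (Fin d) (Fin d) ℝ) * Sig
      = Sig * (φ g : Matrix (Fin d) (Fin d) ℝ))
    (W V : Matrix (Fin d) (Fin k) ℝ)
    (hV : ∀ g : G, (φ g : Matrix (Fin d) (Fin d) ℝ) * V * (ψ g⁻¹ : Matrix (Fin k) (Fin k) ℝ) = V) :
    ((PsiG lam φ ψ W)ᵀ * (Sig * V)).trace = (Wᵀ * (Sig * V)).trace := by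
  set N : Matrix (Fin d) (Fin k) ℝ := Sig * V with hN
  set F : G → Matrix (Fin d) (Fin k) ℝ :=
    fun g => (φ g : Matrix (Fin d) (Fin d) ℝ) * W * (ψ g⁻¹ : Matrix (Fin k) (Fin k) ℝ) with hF
  have pergoal : ∀ g : G, ((F g)ᵀ * N).trace = (Wᵀ * N).trace := by
    intro g
    have e1 : (F g)ᵀ = (ψ g : Matrix (Fin k) (Fin k) ℝ) * Wᵀ
        * (φ g⁻¹ : Matrix (Fin d) (Fin d) ℝ) := by
      rw [hF]
      simp only []
      rw [Matrix.transpose_mul, Matrix.transpose_mul, coe_inv_orth ψ g, coe_inv_orth φ g,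
        Matrix.transpose_transpose, Matrix.mul_assoc, ← coe_inv_orth φ g]
    have e2 : (φ g⁻¹ : Matrix (Fin d) (Fin d) ℝ) * Sig
        = Sig * (φ g⁻¹ : Matrix (Fin d) (Fin d) ℝ) := hcomm g⁻¹
    have e3 : (φ g⁻¹ : Matrix (Fin d) (Fin d) ℝ) * V * (ψ g : Matrix (Fin k) (Fin k) ℝ) = V := by
      have := hV g⁻¹
      rwa [inv_inv] at this
    calc ((F g)ᵀ * N).trace
        = ((ψ g : Matrix (Fin k) (Fin k) ℝ) * (Wᵀ * ((φ g⁻¹ : Matrix (Fin d) (Fin d) ℝ) * N))).trace := by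
          rw [e1, Matrix.mul_assoc, Matrix.mul_assoc]
      _ = ((Wᵀ * ((φ g⁻¹ : Matrix (Fin d) (Fin d) ℝ) * N)) * (ψ g : Matrix (Fin k) (Fin k) ℝ)).trace :=
          Matrix.trace_mul_comm _ _
      _ = (Wᵀ * (Sig * ((φ g⁻¹ : Matrix (Fin d) (Fin d) ℝ) * V * (ψ g : Matrix (Fin k) (Fin k) ℝ)))).trace := by
          rw [hN, ← Matrix.mul_assoc (φ g⁻¹ : Matrix (Fin d) (Fin d) ℝ) Sig V, e2]
          rw [Matrix.mul_assoc, Matrix.mul_assoc, Matrix.mul_assoc, Matrix.mul_assoc]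
      _ = (Wᵀ * N).trace := by rw [e3, hN]
  calc ((PsiG lam φ ψ W)ᵀ * N).trace
      = ∑ j, ∑ i, (PsiG lam φ ψ W) i j * N i j := trace_tmul _ _
    _ = ∑ j, ∑ i, ∫ g, F g i j * N i j ∂lam := by
        refine Finset.sum_congr rfl fun j _ => Finset.sum_congr rfl fun i _ => ?_
        have h1 : (PsiG lam φ ψ W) i j = ∫ g, F g i j ∂lam := rfl
        rw [h1, ← integral_mul_const]
    _ = ∑ j, ∫ g, ∑ i, F g i j * N i j ∂lam := by
        refine Finset.sum_congr rfl fun j _ => ?_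
        exact (integral_finset_sum _ fun i _ =>
          (entry_integrable φ ψ lam hφ hψ W i j).mul_const _).symm
    _ = ∫ g, ∑ j, ∑ i, F g i j * N i j ∂lam :=
        (integral_finset_sum _ fun j _ => integrable_finset_sum _ fun i _ =>
          (entry_integrable φ ψ lam hφ hψ W i j).mul_const _).symm
    _ = ∫ g, ((F g)ᵀ * N).trace ∂lam := by
        refine integral_congr_ae (Filter.Eventually.of_forall fun g => ?_)
        exact (trace_tmul _ _).symm
    _ = ∫ (_ : G), (Wᵀ * N).trace ∂lam := by
        refine integral_congr_ae (Filter.Eventually.of_forall fun g => ?_)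
        exact pergoal g
    _ = (Wᵀ * N).trace := by rw [integral_const]; simp

end Aux3

section Prob
variable {d k : ℕ} {Ω : Type*} [MeasurableSpace Ω]

lemma prob_part (P : Measure Ω) [IsProbabilityMeasure P]
    (μ : Measure (Fin d → ℝ)) [IsProbabilityMeasure μ]
    (hmom : ∀ i j : Fin d, Integrable (fun x => x i * x j) μ)
    (Sig : Matrix (Fin d) (Fin d) ℝ)
    (hSig : ∀ i j : Fin d, Sig i j = ∫ x, x i * x j ∂μ)
    (Xr : Ω → Fin d → ℝ) (hXrm : Measurable Xr) (hXrlaw : P.map Xr = μ)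
    (ξ : Ω → Fin k → ℝ) (hξm : Measurable ξ)
    (hmean : ∀ j, ∫ ω, ξ ω j ∂P = 0)
    (hvar : ∀ j, Integrable (fun ω => (ξ ω j) ^ 2) P)
    (hindep : IndepFun Xr ξ P)
    (C : Matrix (Fin d) (Fin k) ℝ) :
    ∫ ω, ∑ j, ((Cᵀ *ᵥ Xr ω) j + ξ ω j) ^ 2 ∂P
      = (∑ j, ∑ i, ∑ i', C i j * C i' j * Sig i i') + ∫ ω, ∑ j, (ξ ω j) ^ 2 ∂P := by
  have hXXP : ∀ i i' : Fin d, Integrable (fun ω => Xr ω i * Xr ω i') P := by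
    intro i i'
    have h := hmom i i'
    rw [← hXrlaw] at h
    exact (integrable_map_measure
      (((measurable_pi_apply i).mul (measurable_pi_apply i')).aestronglyMeasurable)
      hXrm.aemeasurable).mp h
  have hX1 : ∀ i, Integrable (fun ω => Xr ω i) P := by
    intro i
    have hsq : Integrable (fun ω => (Xr ω i) ^ 2) P := by
      have := hXXP i i
      refine this.congr (Filter.Eventually.of_forall fun ω => ?_)
      ring
    have hm : AEStronglyMeasurable (fun ω => Xr ω i) P :=
      ((measurable_pi_apply i).comp hXrm).aestronglyMeasurable
    exact ((memLp_two_iff_integrable_sq hm).mpr hsq).integrable one_le_two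
  have hξ1 : ∀ j, Integrable (fun ω => ξ ω j) P := by
    intro j
    have hm : AEStronglyMeasurable (fun ω => ξ ω j) P :=
      ((measurable_pi_apply j).comp hξm).aestronglyMeasurable
    exact ((memLp_two_iff_integrable_sq hm).mpr (hvar j)).integrable one_le_two
  have hXξind : ∀ (i : Fin d) (j : Fin k),
      IndepFun (fun ω => Xr ω i) (fun ω => ξ ω j) P :=
    fun i j => hindep.comp (measurable_pi_apply i) (measurable_pi_apply j)
  have hXξint : ∀ (i : Fin d) (j : Fin k),
      Integrable (fun ω => Xr ω i * ξ ω j) P :=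
    fun i j => (hXξind i j).integrable_mul (hX1 i) (hξ1 j)
  have hXξ0 : ∀ (i : Fin d) (j : Fin k), ∫ ω, Xr ω i * ξ ω j ∂P = 0 := by
    intro i j
    have h := (hXξind i j).integral_mul_eq_mul_integral (hX1 i).1 (hξ1 j).1
    rw [show ((fun ω => Xr ω i) * fun ω => ξ ω j) = (fun ω => Xr ω i * ξ ω j) from rfl] at h
    rw [h, hmean j, mul_zero]
  have hSigP : ∀ i i' : Fin d, ∫ ω, Xr ω i * Xr ω i' ∂P = Sig i i' := by
    intro i i'
    rw [hSig, ← hXrlaw, integral_map (f := fun x : Fin d → ℝ => x i * x i') hXrm.aemeasurable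
      (((measurable_pi_apply i).mul (measurable_pi_apply i')).aestronglyMeasurable)]
  have hpt : ∀ ω, (∑ j, ((Cᵀ *ᵥ Xr ω) j + ξ ω j) ^ 2)
      = (∑ j, ∑ i, ∑ i', (C i j * C i' j) * (Xr ω i * Xr ω i'))
        + ((∑ j, ∑ i, (2 * C i j) * (Xr ω i * ξ ω j)) + ∑ j, (ξ ω j) ^ 2) := by
    intro ω
    rw [← Finset.sum_add_distrib, ← Finset.sum_add_distrib]
    refine Finset.sum_congr rfl fun j _ => ?_
    have h1 : (Cᵀ *ᵥ Xr ω) j = ∑ i, C i j * Xr ω i := by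
      simp [Matrix.mulVec, dotProduct, Matrix.transpose_apply]
    have e1 : (∑ i, C i j * Xr ω i) ^ 2
        = ∑ i, ∑ i', (C i j * C i' j) * (Xr ω i * Xr ω i') := by
      rw [sq, Finset.sum_mul_sum]
      exact Finset.sum_congr rfl fun i _ => Finset.sum_congr rfl fun i' _ => by ring
    have e2 : 2 * (∑ i, C i j * Xr ω i) * ξ ω j
        = ∑ i, (2 * C i j) * (Xr ω i * ξ ω j) := by
      rw [Finset.mul_sum, Finset.sum_mul]
      exact Finset.sum_congr rfl fun i _ => by ring
    rw [h1, add_sq, e1, e2, add_assoc]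
  rw [integral_congr_ae (Filter.Eventually.of_forall hpt)]
  have int1 : Integrable (fun ω => ∑ j : Fin k, ∑ i, ∑ i',
      (C i j * C i' j) * (Xr ω i * Xr ω i')) P :=
    integrable_finset_sum _ fun j _ => integrable_finset_sum _ fun i _ =>
      integrable_finset_sum _ fun i' _ => (hXXP i i').const_mul _
  have int2 : Integrable (fun ω => ∑ j, ∑ i, (2 * C i j) * (Xr ω i * ξ ω j)) P :=
    integrable_finset_sum _ fun j _ => integrable_finset_sum _ fun i _ =>
      (hXξint i j).const_mul _
  have int3 : Integrable (fun ω => ∑ j, (ξ ω j) ^ 2) P :=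
    integrable_finset_sum _ fun j _ => hvar j
  have int23 : Integrable (fun ω => (∑ j, ∑ i, (2 * C i j) * (Xr ω i * ξ ω j))
      + ∑ j, (ξ ω j) ^ 2) P := int2.add int3
  rw [integral_add int1 int23, integral_add int2 int3]
  have hI1 : ∫ ω, ∑ j : Fin k, ∑ i, ∑ i', (C i j * C i' j) * (Xr ω i * Xr ω i') ∂P
      = ∑ j, ∑ i, ∑ i', C i j * C i' j * Sig i i' := by
    rw [integral_finset_sum _ fun j _ => integrable_finset_sum _ fun i _ =>
      integrable_finset_sum _ fun i' _ => (hXXP i i').const_mul _]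
    refine Finset.sum_congr rfl fun j _ => ?_
    rw [integral_finset_sum _ fun i _ =>
      integrable_finset_sum _ fun i' _ => (hXXP i i').const_mul _]
    refine Finset.sum_congr rfl fun i _ => ?_
    rw [integral_finset_sum _ fun i' _ => (hXXP i i').const_mul _]
    refine Finset.sum_congr rfl fun i' _ => ?_
    rw [integral_const_mul, hSigP i i']
  have hI2 : ∫ ω, ∑ j, ∑ i, (2 * C i j) * (Xr ω i * ξ ω j) ∂P = 0 := by
    rw [integral_finset_sum _ fun j _ => integrable_finset_sum _ fun i _ =>
      (hXξint i j).const_mul _]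
    refine Finset.sum_eq_zero fun j _ => ?_
    rw [integral_finset_sum _ fun i _ => (hXξint i j).const_mul _]
    refine Finset.sum_eq_zero fun i _ => ?_
    rw [integral_const_mul, hXξ0 i j, mul_zero]
  rw [hI1, hI2]
  ring

end Prob

/-- Let `X ∼ μ` with `μ` a `𝒢`-invariant distribution on `ℝᵈ` with
`Σ = E[XXᵀ]` finite, and let `ξ ∈ ℝᵏ` be independent of `X` with mean `0` and finite variance.
Set `Y = Θᵀ X + ξ` where `f_Θ(x) = Θᵀ x` is `𝒢`-equivariant. Then for any `W ∈ ℝ^{d×k}`,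
`Δ(f_W, f_W̄) := E‖Y − Wᵀ X‖₂² − E‖Y − W̄ᵀ X‖₂² = ‖Σ^{1/2} W^⊥‖_F²`, where `W̄ = Ψ_𝒢(W)` and
`W^⊥ = W − Ψ_𝒢(W)`. -/
theorem stmt13 {d k : ℕ} {G Ω : Type*} [Group G] [MeasurableSpace G] [MeasurableSpace Ω]
    (lam : Measure G) [IsProbabilityMeasure lam]
    (hlinv : ∀ g : G, lam.map (fun h => g * h) = lam)
    (hrinv : ∀ g : G, lam.map (fun h => h * g) = lam)
    (φ : G →* Matrix.orthogonalGroup (Fin d) ℝ)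
    (ψ : G →* Matrix.orthogonalGroup (Fin k) ℝ)
    (hφ : ∀ i j, Measurable fun g => (φ g : Matrix (Fin d) (Fin d) ℝ) i j)
    (hψ : ∀ i j, Measurable fun g => (ψ g : Matrix (Fin k) (Fin k) ℝ) i j)
    (μ : Measure (Fin d → ℝ)) [IsProbabilityMeasure μ]
    (hμinv : ∀ g : G, μ.map (fun x => (φ g : Matrix (Fin d) (Fin d) ℝ) *ᵥ x) = μ)
    (hmom : ∀ i j : Fin d, Integrable (fun x => x i * x j) μ)
    (Sig : Matrix (Fin d) (Fin d) ℝ)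
    (hSig : ∀ i j : Fin d, Sig i j = ∫ x, x i * x j ∂μ)
    (hpsd : Sig.PosSemidef)
    (P : Measure Ω) [IsProbabilityMeasure P]
    (Xr : Ω → Fin d → ℝ) (hXrm : Measurable Xr) (hXrlaw : P.map Xr = μ)
    (ξ : Ω → Fin k → ℝ) (hξm : Measurable ξ)
    (hmean : ∀ j, ∫ ω, ξ ω j ∂P = 0)
    (hvar : ∀ j, Integrable (fun ω => (ξ ω j) ^ 2) P)
    (hindep : IndepFun Xr ξ P)
    (Θ : Matrix (Fin d) (Fin k) ℝ)
    (hequiv : ∀ (g : G) (x : Fin d → ℝ),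
      Θᵀ *ᵥ ((φ g : Matrix (Fin d) (Fin d) ℝ) *ᵥ x)
        = (ψ g : Matrix (Fin k) (Fin k) ℝ) *ᵥ (Θᵀ *ᵥ x))
    (W : Matrix (Fin d) (Fin k) ℝ) :
    (∫ ω, ∑ j, ((Θᵀ *ᵥ Xr ω) j + ξ ω j - (Wᵀ *ᵥ Xr ω) j) ^ 2 ∂P)
      - (∫ ω, ∑ j, ((Θᵀ *ᵥ Xr ω) j + ξ ω j - ((PsiG lam φ ψ W)ᵀ *ᵥ Xr ω) j) ^ 2 ∂P)
      = ∑ i, ∑ j, ((hpsd.sqrt * (W - PsiG lam φ ψ W)) i j) ^ 2 := by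
  set Wb : Matrix (Fin d) (Fin k) ℝ := PsiG lam φ ψ W with hWb
  -- rewrite the integrands
  have hre : ∀ (V : Matrix (Fin d) (Fin k) ℝ) (ω : Ω),
      (∑ j, ((Θᵀ *ᵥ Xr ω) j + ξ ω j - (Vᵀ *ᵥ Xr ω) j) ^ 2)
        = ∑ j, (((Θ - V)ᵀ *ᵥ Xr ω) j + ξ ω j) ^ 2 := by
    intro V ω
    refine Finset.sum_congr rfl fun j _ => ?_
    have h1 : ((Θ - V)ᵀ *ᵥ Xr ω) j = (Θᵀ *ᵥ Xr ω) j - (Vᵀ *ᵥ Xr ω) j := by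
      rw [Matrix.transpose_sub, Matrix.sub_mulVec]; rfl
    rw [h1]; ring
  rw [integral_congr_ae (Filter.Eventually.of_forall (hre W)),
    integral_congr_ae (Filter.Eventually.of_forall (hre Wb)),
    prob_part P μ hmom Sig hSig Xr hXrm hXrlaw ξ hξm hmean hvar hindep (Θ - W),
    prob_part P μ hmom Sig hSig Xr hXrm hXrlaw ξ hξm hmean hvar hindep (Θ - Wb)]
  -- convert triple sums to traces
  have tsum : ∀ C : Matrix (Fin d) (Fin k) ℝ,
      (∑ j, ∑ i, ∑ i', C i j * C i' j * Sig i i') = (Cᵀ * (Sig * C)).trace := by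
    intro C
    rw [trace_tmul]
    refine Finset.sum_congr rfl fun j _ => Finset.sum_congr rfl fun i _ => ?_
    rw [Matrix.mul_apply, Finset.mul_sum]
    exact Finset.sum_congr rfl fun i' _ => by ring
  rw [tsum (Θ - W), tsum (Θ - Wb)]
  -- algebraic facts
  have hSigT : Sigᵀ = Sig := by
    rw [← Matrix.conjTranspose_eq_transpose_of_trivial]
    exact hpsd.1
  have hcomm : ∀ g : G, (φ g : Matrix (Fin d) (Fin d) ℝ) * Sig
      = Sig * (φ g : Matrix (Fin d) (Fin d) ℝ) :=
    fun g => sig_comm φ μ hμinv hmom Sig hSig g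
  have hΘfix := theta_fixed φ ψ Θ hequiv
  have hWbfix := psiG_fixed φ ψ lam hlinv hφ hψ W
  have hBfix : ∀ g : G, (φ g : Matrix (Fin d) (Fin d) ℝ) * (Θ - Wb)
      * (ψ g⁻¹ : Matrix (Fin k) (Fin k) ℝ) = Θ - Wb := by
    intro g
    rw [Matrix.mul_sub, Matrix.sub_mul]
    rw [hΘfix g]
    rw [hWb, hWbfix g]
  have key := key_trace φ ψ lam hφ hψ Sig hcomm W (Θ - Wb) hBfix
  have hperp : ((W - Wb)ᵀ * (Sig * (Θ - Wb))).trace = 0 := by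
    rw [Matrix.transpose_sub, Matrix.sub_mul, Matrix.trace_sub, ← key, hWb, sub_self]
  have hsymm : ∀ Cc Dd : Matrix (Fin d) (Fin k) ℝ,
      (Ccᵀ * (Sig * Dd)).trace = (Ddᵀ * (Sig * Cc)).trace := by
    intro Cc Dd
    calc (Ccᵀ * (Sig * Dd)).trace = ((Ccᵀ * (Sig * Dd))ᵀ).trace :=
          (Matrix.trace_transpose _).symm
      _ = (Ddᵀ * (Sig * Cc)).trace := by
          rw [Matrix.transpose_mul, Matrix.transpose_mul, Matrix.transpose_transpose,
            hSigT, Matrix.mul_assoc]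
  have hAB : Θ - W = (Θ - Wb) - (W - Wb) := by abel
  have hexp : ((Θ - W)ᵀ * (Sig * (Θ - W))).trace
      = ((Θ - Wb)ᵀ * (Sig * (Θ - Wb))).trace
        - ((W - Wb)ᵀ * (Sig * (Θ - Wb))).trace
        - ((Θ - Wb)ᵀ * (Sig * (W - Wb))).trace
        + ((W - Wb)ᵀ * (Sig * (W - Wb))).trace := by
    rw [hAB]
    simp only [Matrix.transpose_sub, Matrix.mul_sub, Matrix.sub_mul, Matrix.trace_sub]
    ring
  have hcross2 : ((Θ - Wb)ᵀ * (Sig * (W - Wb))).trace = 0 := by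
    rw [hsymm (Θ - Wb) (W - Wb)]
    exact hperp
  -- final form of the squared Frobenius norm
  have hS : hpsd.sqrt * hpsd.sqrt = Sig := hpsd.sqrt_mul_self
  have hST : hpsd.sqrtᵀ = hpsd.sqrt := by
    rw [← Matrix.conjTranspose_eq_transpose_of_trivial]
    exact hpsd.sqrt_isHermitian
  have hfro : ((W - Wb)ᵀ * (Sig * (W - Wb))).trace
      = ∑ i, ∑ j, ((hpsd.sqrt * (W - Wb)) i j) ^ 2 := by
    have h1 : (hpsd.sqrt * (W - Wb))ᵀ * (hpsd.sqrt * (W - Wb))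
        = (W - Wb)ᵀ * (Sig * (W - Wb)) := by
      rw [Matrix.transpose_mul, hST, Matrix.mul_assoc,
        ← Matrix.mul_assoc hpsd.sqrt hpsd.sqrt (W - Wb), hS]
    rw [← h1, trace_tmul, Finset.sum_comm]
    exact Finset.sum_congr rfl fun i _ => Finset.sum_congr rfl fun j _ => by ring
  rw [← hfro]
  linarith [hexp, hperp, hcross2]
end

section
/- Let 0 < n < d, let P₀ ∈ ℝ^{d×d} be a fixed orthogonal projection of rank n, let R be distributed according to the Haar probability measure on the orthogonal group O(d), and set P = R P₀ Rᵀ (so that the range of P is a uniformly distributed n-dimensional subspace of ℝᵈ). Then for all indices a, b, c, e ∈ {1,…,d}: E[P_{ab} P_{ce}] = β(δ_{ab}δ_{ce} + δ_{ac}δ_{be} + δ_{ae}δ_{bc}) + (n(n−1)/(d(d−1))) δ_{ab}δ_{ce}, where β = n(d−n)/(d(d−1)(d+2)) and δ is the Kronecker delta. -/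
open Matrix MeasureTheory

instance matrixMeasurableSpace {m n α : Type*} [MeasurableSpace α] :
    MeasurableSpace (Matrix m n α) :=
  MeasurableSpace.pi

namespace Stmt17

set_option linter.unusedSectionVars false

variable {d : ℕ} (P₀ : Matrix (Fin d) (Fin d) ℝ)

abbrev OG (d : ℕ) := Matrix.orthogonalGroup (Fin d) ℝ
def PM (R : OG d) : Matrix (Fin d) (Fin d) ℝ :=
  (R : Matrix (Fin d) (Fin d) ℝ) * P₀ * (R : Matrix (Fin d) (Fin d) ℝ)ᵀ

lemma coe_orth (R : OG d) : (R : Matrix (Fin d) (Fin d) ℝ)ᵀ * (R : Matrix (Fin d) (Fin d) ℝ) = 1 := by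
  have := R.2
  rw [Matrix.mem_orthogonalGroup_iff'] at this
  exact this

lemma coe_orth' (R : OG d) : (R : Matrix (Fin d) (Fin d) ℝ) * (R : Matrix (Fin d) (Fin d) ℝ)ᵀ = 1 := by
  have := R.2
  rw [Matrix.mem_orthogonalGroup_iff] at this
  exact this

lemma pm_symm (hsym : P₀ᵀ = P₀) (R : OG d) : (PM P₀ R)ᵀ = PM P₀ R := by
  simp [PM, Matrix.transpose_mul, hsym, Matrix.mul_assoc]

lemma pm_idem (hidem : P₀ * P₀ = P₀) (R : OG d) : PM P₀ R * PM P₀ R = PM P₀ R := by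
  simp only [PM, Matrix.mul_assoc]
  rw [← Matrix.mul_assoc ((R : Matrix (Fin d) (Fin d) ℝ)ᵀ) _ _, coe_orth, Matrix.one_mul,
    ← Matrix.mul_assoc P₀ P₀ _, hidem]

lemma pm_trace {n : ℕ} (htr : P₀.trace = (n : ℝ)) (R : OG d) : (PM P₀ R).trace = (n : ℝ) := by
  rw [PM, Matrix.trace_mul_cycle, coe_orth, Matrix.one_mul, htr]

lemma meas_entry (i k : Fin d) : Measurable fun R : OG d => (R : Matrix (Fin d) (Fin d) ℝ) i k :=
  (measurable_pi_apply k).comp ((measurable_pi_apply i).comp measurable_subtype_coe)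

lemma meas_pm (a b : Fin d) : Measurable fun R : OG d => PM P₀ R a b := by
  simp only [PM, Matrix.mul_apply, Matrix.transpose_apply]
  exact Finset.measurable_sum _ fun l _ =>
    ((Finset.measurable_sum _ fun k _ => (meas_entry a k).mul measurable_const).mul
      (meas_entry b l))

lemma entry_abs_le (R : OG d) (i k : Fin d) : |(R : Matrix (Fin d) (Fin d) ℝ) i k| ≤ 1 := by
  have h := congrFun (congrFun (coe_orth' R) i) i
  simp only [Matrix.mul_apply, Matrix.transpose_apply, Matrix.one_apply_eq] at h
  have h1 : (R : Matrix (Fin d) (Fin d) ℝ) i k * (R : Matrix (Fin d) (Fin d) ℝ) i k ≤ 1 := by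
    rw [← h]
    exact Finset.single_le_sum (f := fun l => (R : Matrix (Fin d) (Fin d) ℝ) i l * (R : Matrix (Fin d) (Fin d) ℝ) i l)
      (fun l _ => mul_self_nonneg _) (Finset.mem_univ k)
  nlinarith [abs_nonneg ((R : Matrix (Fin d) (Fin d) ℝ) i k), sq_abs ((R : Matrix (Fin d) (Fin d) ℝ) i k)]

lemma pm_abs_le (R : OG d) (a b : Fin d) :
    |PM P₀ R a b| ≤ ∑ k, ∑ l, |P₀ k l| := by
  simp only [PM, Matrix.mul_apply, Matrix.transpose_apply]
  calc |∑ l, (∑ k, (R : Matrix (Fin d) (Fin d) ℝ) a k * P₀ k l) * (R : Matrix (Fin d) (Fin d) ℝ) b l|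
      ≤ ∑ l, |(∑ k, (R : Matrix (Fin d) (Fin d) ℝ) a k * P₀ k l) * (R : Matrix (Fin d) (Fin d) ℝ) b l| :=
        Finset.abs_sum_le_sum_abs _ _
    _ ≤ ∑ l, ∑ k, |P₀ k l| := by
        apply Finset.sum_le_sum; intro l _
        rw [abs_mul]
        calc |∑ k, (R : Matrix (Fin d) (Fin d) ℝ) a k * P₀ k l| * |(R : Matrix (Fin d) (Fin d) ℝ) b l|
            ≤ |∑ k, (R : Matrix (Fin d) (Fin d) ℝ) a k * P₀ k l| * 1 :=
              mul_le_mul_of_nonneg_left (entry_abs_le R b l) (abs_nonneg _)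
          _ = |∑ k, (R : Matrix (Fin d) (Fin d) ℝ) a k * P₀ k l| := mul_one _
          _ ≤ ∑ k, |(R : Matrix (Fin d) (Fin d) ℝ) a k * P₀ k l| := Finset.abs_sum_le_sum_abs _ _
          _ ≤ ∑ k, |P₀ k l| := by
              apply Finset.sum_le_sum; intro k _
              rw [abs_mul]
              calc |(R : Matrix (Fin d) (Fin d) ℝ) a k| * |P₀ k l| ≤ 1 * |P₀ k l| :=
                    mul_le_mul_of_nonneg_right (entry_abs_le R a k) (abs_nonneg _)
                _ = |P₀ k l| := one_mul _
    _ = ∑ k, ∑ l, |P₀ k l| := Finset.sum_comm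


variable (μ : Measure (OG d)) [IsProbabilityMeasure μ]

noncomputable def Fm (a b c e : Fin d) : ℝ := ∫ R, PM P₀ R a b * PM P₀ R c e ∂μ

lemma integrable_pm (a b c e : Fin d) :
    Integrable (fun R : OG d => PM P₀ R a b * PM P₀ R c e) μ := by
  set K := ∑ k, ∑ l, |P₀ k l| with hK
  refine (integrable_const (K * K)).mono'
    (((meas_pm P₀ a b).mul (meas_pm P₀ c e)).aestronglyMeasurable) ?_
  refine Filter.Eventually.of_forall fun R => ?_
  rw [Real.norm_eq_abs, abs_mul]
  have h0 : (0:ℝ) ≤ K := le_trans (abs_nonneg _) (pm_abs_le P₀ R a b)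
  exact mul_le_mul (pm_abs_le P₀ R a b) (pm_abs_le P₀ R c e) (abs_nonneg _) h0

lemma meas_mul_left (Q : OG d) : Measurable fun R : OG d => Q * R := by
  have h : Measurable fun R : OG d =>
      ((Q : Matrix (Fin d) (Fin d) ℝ) * (R : Matrix (Fin d) (Fin d) ℝ)) := by
    apply measurable_pi_lambda; intro i
    apply measurable_pi_lambda; intro j
    simp only [Matrix.mul_apply]
    exact Finset.measurable_sum _ fun k _ => measurable_const.mul
      ((measurable_pi_apply j).comp ((measurable_pi_apply k).comp measurable_subtype_coe))
  exact Measurable.subtype_mk h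

lemma pm_conj (Q R : OG d) :
    PM P₀ (Q * R) = (Q : Matrix (Fin d) (Fin d) ℝ) * PM P₀ R * (Q : Matrix (Fin d) (Fin d) ℝ)ᵀ := by
  simp only [PM, Submonoid.coe_mul, Matrix.transpose_mul, Matrix.mul_assoc]

lemma Fm_inv (hlinv : ∀ g : OG d, μ.map (fun r => g * r) = μ) (Q : OG d) (a b c e : Fin d) :
    Fm P₀ μ a b c e
      = ∫ R, ((Q : Matrix (Fin d) (Fin d) ℝ) * PM P₀ R * (Q : Matrix (Fin d) (Fin d) ℝ)ᵀ) a b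
          * ((Q : Matrix (Fin d) (Fin d) ℝ) * PM P₀ R * (Q : Matrix (Fin d) (Fin d) ℝ)ᵀ) c e ∂μ := by
  have h1 : Fm P₀ μ a b c e = ∫ R, PM P₀ (Q * R) a b * PM P₀ (Q * R) c e ∂μ := by
    rw [Fm]
    conv_lhs => rw [← hlinv Q]
    rw [integral_map (meas_mul_left Q).aemeasurable]
    rw [hlinv Q]
    exact (((meas_pm P₀ a b).mul (meas_pm P₀ c e)).aestronglyMeasurable)
  rw [h1]
  simp only [pm_conj]
/-- signed permutation matrix -/
def sp (σ : Equiv.Perm (Fin d)) (s : Fin d → ℝ) : Matrix (Fin d) (Fin d) ℝ :=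
  fun i j => s i * (if σ j = i then 1 else 0)

lemma sp_mem (σ : Equiv.Perm (Fin d)) (s : Fin d → ℝ) (hs : ∀ i, s i * s i = 1) :
    sp σ s ∈ OG d := by
  rw [Matrix.mem_orthogonalGroup_iff']
  ext i j
  simp only [Matrix.mul_apply, Matrix.transpose_apply, sp]
  have : ∀ k, (s k * (if σ i = k then 1 else 0)) * (s k * (if σ j = k then 1 else 0))
      = if σ i = k then (if σ j = k then s k * s k else 0) else 0 := by
    intro k; split_ifs <;> ring
  simp only [this]
  rw [Finset.sum_ite_eq (Finset.univ) (σ i)]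
  simp only [Finset.mem_univ, if_true]
  by_cases h : σ j = σ i
  · have : i = j := σ.injective (h.symm)
    simp [h, this, hs, Matrix.one_apply]
  · have : ¬ i = j := fun hh => h (by rw [hh])
    simp [h, this, Matrix.one_apply]

lemma sp_conj (σ : Equiv.Perm (Fin d)) (s : Fin d → ℝ) (M : Matrix (Fin d) (Fin d) ℝ)
    (a b : Fin d) :
    (sp σ s * M * (sp σ s)ᵀ) a b = s a * s b * M (σ.symm a) (σ.symm b) := by
  simp only [Matrix.mul_apply, Matrix.transpose_apply, sp]
  have h1 : ∀ l, (∑ k, (s a * (if σ k = a then 1 else 0)) * M k l) * (s b * (if σ l = b then 1 else 0))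
      = (if l = σ.symm b then (s a * M (σ.symm a) l) * s b else 0) := by
    intro l
    have hsum : ∑ k, (s a * (if σ k = a then 1 else 0)) * M k l = s a * M (σ.symm a) l := by
      have : ∀ k, (s a * (if σ k = a then 1 else 0)) * M k l
          = if k = σ.symm a then s a * M (σ.symm a) l else 0 := by
        intro k
        by_cases h : k = σ.symm a
        · subst h; simp
        · have : ¬ σ k = a := fun hh => h (by rw [← hh]; simp)
          simp [h, this]
      simp only [this]
      rw [Finset.sum_ite_eq' Finset.univ (σ.symm a)]
      simp
    rw [hsum]
    by_cases h : l = σ.symm b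
    · subst h; simp
    · have : ¬ σ l = b := fun hh => h (by rw [← hh]; simp)
      simp [h, this]
  simp only [h1]
  rw [Finset.sum_ite_eq' Finset.univ (σ.symm b)]
  simp; ring
noncomputable def rv : ℝ := (Real.sqrt 2)⁻¹

lemma rv_sq : rv * rv = 1/2 := by
  rw [rv, ← mul_inv]
  rw [Real.mul_self_sqrt (by norm_num : (0:ℝ) ≤ 2)]
  norm_num

noncomputable def rot (i j : Fin d) : Matrix (Fin d) (Fin d) ℝ := fun k l =>
  if k = i then (if l = i then rv else if l = j then rv else 0)
  else if k = j then (if l = i then -rv else if l = j then rv else 0)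
  else (if k = l then 1 else 0)

lemma rot_mem (i j : Fin d) (hij : i ≠ j) : rot i j ∈ OG d := by
  rw [Matrix.mem_orthogonalGroup_iff']
  ext k l
  simp only [Matrix.mul_apply, Matrix.transpose_apply]
  have key : ∀ m, rot i j m k * rot i j m l
      = (if m = i then rot i j i k * rot i j i l else 0)
      + (if m = j then rot i j j k * rot i j j l else 0)
      + (if m = k ∧ ¬ k = i ∧ ¬ k = j then (if k = l then 1 else 0) else 0) := by
    intro m
    by_cases hmi : m = i
    · subst hmi
      have : ¬ m = j := hij
      simp only [if_pos rfl, if_neg this]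
      by_cases hmk : m = k
      · subst hmk; simp [hij]
      · simp [hmk]
    · by_cases hmj : m = j
      · subst hmj
        simp only [if_neg hmi, if_pos rfl]
        by_cases hmk : m = k
        · subst hmk; simp [hmi]
        · simp [hmi, hmk]
      · have hm : rot i j m = fun l => if m = l then 1 else 0 := by
          funext l'; simp [rot, hmi, hmj]
        simp only [hm, if_neg hmi, if_neg hmj, zero_add]
        by_cases hmk : m = k
        · subst hmk
          simp [hmi, hmj]
        · have h2 : (if m = k then (1:ℝ) else 0) = 0 := by simp [hmk]
          simp [hmk, h2]
  rw [Finset.sum_congr rfl (fun m _ => key m)]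
  rw [Finset.sum_add_distrib, Finset.sum_add_distrib,
    Finset.sum_ite_eq' Finset.univ i, Finset.sum_ite_eq' Finset.univ j]
  have h3 : ∑ m, (if m = k ∧ ¬ k = i ∧ ¬ k = j then (if k = l then (1:ℝ) else 0) else 0)
      = if ¬ k = i ∧ ¬ k = j then (if k = l then (1:ℝ) else 0) else 0 := by
    by_cases hQ : ¬ k = i ∧ ¬ k = j
    · rw [if_pos hQ]
      have hQ' : (¬ k = i ∧ ¬ k = j) = True := by simp [hQ.1, hQ.2]
      simp only [hQ', and_true]
      rw [Finset.sum_ite_eq' Finset.univ k]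
      simp
    · rw [if_neg hQ]
      apply Finset.sum_eq_zero
      intro m _
      rw [if_neg]
      tauto
  rw [h3]
  simp only [Finset.mem_univ, if_true]
  have hji : j ≠ i := Ne.symm hij
  by_cases hki : k = i <;> by_cases hkj : k = j <;> by_cases hli : l = i <;> by_cases hlj : l = j <;>
    simp_all [rot, Matrix.one_apply] <;>
    first
      | (exact (if_neg (fun h => by simp_all)).symm)
      | (exact fun h => by simp_all [eq_comm])
      | nlinarith [rv_sq]

lemma rot_conj (i j : Fin d) (hij : i ≠ j) (M : Matrix (Fin d) (Fin d) ℝ) :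
    (rot i j * M * (rot i j)ᵀ) i i = rv * rv * (M i i + M i j + M j i + M j j) := by
  simp only [Matrix.mul_apply, Matrix.transpose_apply]
  have hrow : ∀ l, ∑ k, rot i j i k * M k l = rv * M i l + rv * M j l := by
    intro l
    have : ∀ k, rot i j i k * M k l
        = (if k = i then rv * M i l else 0) + (if k = j then rv * M j l else 0) := by
      intro k
      by_cases hki : k = i
      · subst hki; simp [rot, Ne.symm hij, hij]
      · by_cases hkj : k = j
        · subst hkj; simp [rot, hki, Ne.symm hij]
        · simp [rot, hki, hkj]
    rw [Finset.sum_congr rfl (fun k _ => this k), Finset.sum_add_distrib,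
      Finset.sum_ite_eq' Finset.univ i, Finset.sum_ite_eq' Finset.univ j]
    simp
  rw [Finset.sum_congr rfl (fun l _ => by rw [hrow l])]
  have : ∀ l, (rv * M i l + rv * M j l) * rot i j i l
      = (if l = i then (rv * M i i + rv * M j i) * rv else 0)
      + (if l = j then (rv * M i j + rv * M j j) * rv else 0) := by
    intro l
    by_cases hli : l = i
    · subst hli; simp [rot, Ne.symm hij, hij]
    · by_cases hlj : l = j
      · subst hlj; simp [rot, hli, Ne.symm hij]
      · simp [rot, hli, hlj]
  rw [Finset.sum_congr rfl (fun l _ => this l), Finset.sum_add_distrib,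
    Finset.sum_ite_eq' Finset.univ i, Finset.sum_ite_eq' Finset.univ j]
  simp; ring

lemma Fm_signperm (hlinv : ∀ g : OG d, μ.map (fun r => g * r) = μ)
    (σ : Equiv.Perm (Fin d)) (s : Fin d → ℝ) (hs : ∀ i, s i * s i = 1) (a b c e : Fin d) :
    Fm P₀ μ a b c e = s a * s b * (s c * s e) *
      Fm P₀ μ (σ.symm a) (σ.symm b) (σ.symm c) (σ.symm e) := by
  rw [Fm_inv P₀ μ hlinv ⟨sp σ s, sp_mem σ s hs⟩ a b c e]
  have key : ∀ R : OG d,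
      ((sp σ s : Matrix (Fin d) (Fin d) ℝ) * PM P₀ R * (sp σ s)ᵀ) a b
        * ((sp σ s : Matrix (Fin d) (Fin d) ℝ) * PM P₀ R * (sp σ s)ᵀ) c e
      = s a * s b * (s c * s e) *
        (PM P₀ R (σ.symm a) (σ.symm b) * PM P₀ R (σ.symm c) (σ.symm e)) := by
    intro R
    rw [sp_conj, sp_conj]
    ring
  simp only [key]
  rw [integral_const_mul]
  rfl

lemma Fm_perm (hlinv : ∀ g : OG d, μ.map (fun r => g * r) = μ)
    (σ : Equiv.Perm (Fin d)) (a b c e : Fin d) :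
    Fm P₀ μ (σ a) (σ b) (σ c) (σ e) = Fm P₀ μ a b c e := by
  have := Fm_signperm P₀ μ hlinv σ (fun _ => 1) (fun _ => by norm_num) (σ a) (σ b) (σ c) (σ e)
  simpa using this

lemma Fm_zero_a (hlinv : ∀ g : OG d, μ.map (fun r => g * r) = μ)
    (a b c e : Fin d) (h1 : a ≠ b) (h2 : a ≠ c) (h3 : a ≠ e) :
    Fm P₀ μ a b c e = 0 := by
  have := Fm_signperm P₀ μ hlinv (Equiv.refl (Fin d))
    (fun m => if m = a then -1 else 1)
    (fun m => by by_cases h : m = a <;> simp [h]) a b c e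
  simp only [Equiv.refl_symm, Equiv.refl_apply] at this
  rw [if_neg (Ne.symm h1), if_neg (Ne.symm h2), if_neg (Ne.symm h3)] at this
  simp at this
  linarith

lemma Fm_swap1 (hsym : P₀ᵀ = P₀) (a b c e : Fin d) :
    Fm P₀ μ a b c e = Fm P₀ μ b a c e := by
  unfold Fm
  congr 1
  funext R
  have h := congrFun (congrFun (pm_symm P₀ hsym R) b) a
  simp only [Matrix.transpose_apply] at h
  rw [← h]

lemma Fm_swap2 (hsym : P₀ᵀ = P₀) (a b c e : Fin d) :
    Fm P₀ μ a b c e = Fm P₀ μ a b e c := by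
  unfold Fm
  congr 1
  funext R
  have h := congrFun (congrFun (pm_symm P₀ hsym R) e) c
  simp only [Matrix.transpose_apply] at h
  rw [← h]

lemma Fm_comm (a b c e : Fin d) :
    Fm P₀ μ a b c e = Fm P₀ μ c e a b := by
  unfold Fm
  congr 1
  funext R
  ring

lemma Fm_zero_b (hlinv : ∀ g : OG d, μ.map (fun r => g * r) = μ) (hsym : P₀ᵀ = P₀)
    (a b c e : Fin d) (h1 : b ≠ a) (h2 : b ≠ c) (h3 : b ≠ e) :
    Fm P₀ μ a b c e = 0 := by
  rw [Fm_swap1 P₀ μ hsym]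
  exact Fm_zero_a P₀ μ hlinv b a c e h1 h2 h3

lemma Fm_zero_c (hlinv : ∀ g : OG d, μ.map (fun r => g * r) = μ)
    (a b c e : Fin d) (h1 : c ≠ e) (h2 : c ≠ a) (h3 : c ≠ b) :
    Fm P₀ μ a b c e = 0 := by
  rw [Fm_comm P₀ μ]
  exact Fm_zero_a P₀ μ hlinv c e a b h1 h2 h3

lemma Fm_zero_e (hlinv : ∀ g : OG d, μ.map (fun r => g * r) = μ) (hsym : P₀ᵀ = P₀)
    (a b c e : Fin d) (h1 : e ≠ c) (h2 : e ≠ a) (h3 : e ≠ b) :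
    Fm P₀ μ a b c e = 0 := by
  rw [Fm_comm P₀ μ]
  exact Fm_zero_b P₀ μ hlinv hsym c e a b h1 h2 h3

lemma exists_perm (i j a c : Fin d) (hij : i ≠ j) (hac : a ≠ c) :
    ∃ σ : Equiv.Perm (Fin d), σ i = a ∧ σ j = c := by
  refine ⟨(Equiv.swap i a).trans (Equiv.swap ((Equiv.swap i a) j) c), ?_, ?_⟩
  · have hja : (Equiv.swap i a) j ≠ a := by
      intro h
      have := (Equiv.swap i a).injective (h.trans (Equiv.swap_apply_left i a).symm)
      exact hij this.symm
    simp only [Equiv.trans_apply, Equiv.swap_apply_left]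
    exact Equiv.swap_apply_of_ne_of_ne (Ne.symm hja) hac
  · simp only [Equiv.trans_apply, Equiv.swap_apply_left]

lemma int_add4 (f1 f2 f3 f4 : OG d → ℝ) (h1 : Integrable f1 μ) (h2 : Integrable f2 μ)
    (h3 : Integrable f3 μ) (h4 : Integrable f4 μ) :
    ∫ R, (f1 R + f2 R + f3 R + f4 R) ∂μ
      = (∫ R, f1 R ∂μ) + (∫ R, f2 R ∂μ) + (∫ R, f3 R ∂μ) + (∫ R, f4 R ∂μ) := by
  have h123 : Integrable (fun R => f1 R + f2 R + f3 R) μ := (h1.add h2).add h3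
  have h12 : Integrable (fun R => f1 R + f2 R) μ := h1.add h2
  rw [integral_add h123 h4, integral_add h12 h3, integral_add h1 h2]

lemma sum1 {n : ℕ} (htr : P₀.trace = (n : ℝ)) :
    ∑ a : Fin d, ∑ c : Fin d, Fm P₀ μ a a c c = (n:ℝ) * (n:ℝ) := by
  have step1 : ∀ a : Fin d, ∑ c : Fin d, Fm P₀ μ a a c c
      = ∫ R, ∑ c : Fin d, PM P₀ R a a * PM P₀ R c c ∂μ := by
    intro a
    rw [integral_finset_sum _ (fun c _ => integrable_pm P₀ μ a a c c)]
    rfl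
  rw [Finset.sum_congr rfl fun a _ => step1 a]
  rw [← integral_finset_sum _ (fun a _ =>
    integrable_finset_sum _ (fun c _ => integrable_pm P₀ μ a a c c))]
  have key : ∀ R : OG d, ∑ a : Fin d, ∑ c : Fin d, PM P₀ R a a * PM P₀ R c c
      = (n:ℝ) * (n:ℝ) := by
    intro R
    rw [← Finset.sum_mul_sum]
    have htrace : ∑ a : Fin d, PM P₀ R a a = (n:ℝ) := pm_trace P₀ htr R
    rw [htrace]
  simp only [key]
  simp

lemma sum2 {n : ℕ} (htr : P₀.trace = (n : ℝ)) (hidem : P₀ * P₀ = P₀) :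
    ∑ a : Fin d, ∑ b : Fin d, Fm P₀ μ a b b a = (n:ℝ) := by
  have step1 : ∀ a : Fin d, ∑ b : Fin d, Fm P₀ μ a b b a
      = ∫ R, ∑ b : Fin d, PM P₀ R a b * PM P₀ R b a ∂μ := by
    intro a
    rw [integral_finset_sum _ (fun b _ => integrable_pm P₀ μ a b b a)]
    rfl
  rw [Finset.sum_congr rfl fun a _ => step1 a]
  rw [← integral_finset_sum _ (fun a _ =>
    integrable_finset_sum _ (fun b _ => integrable_pm P₀ μ a b b a))]
  have key : ∀ R : OG d, ∑ a : Fin d, ∑ b : Fin d, PM P₀ R a b * PM P₀ R b a = (n:ℝ) := by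
    intro R
    have h1 : ∑ a : Fin d, ∑ b : Fin d, PM P₀ R a b * PM P₀ R b a
        = (PM P₀ R * PM P₀ R).trace := by
      rw [Matrix.trace]
      simp only [Matrix.diag, Matrix.mul_apply]
    rw [h1, pm_idem P₀ hidem R, pm_trace P₀ htr R]
  simp only [key]
  simp

lemma Fm_rot (hlinv : ∀ g : OG d, μ.map (fun r => g * r) = μ)
    (i j : Fin d) (hij : i ≠ j) :
    Fm P₀ μ i i i i = (1/4) *
      ((Fm P₀ μ i i i i + Fm P₀ μ i i i j + Fm P₀ μ i i j i + Fm P₀ μ i i j j)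
      + (Fm P₀ μ i j i i + Fm P₀ μ i j i j + Fm P₀ μ i j j i + Fm P₀ μ i j j j)
      + (Fm P₀ μ j i i i + Fm P₀ μ j i i j + Fm P₀ μ j i j i + Fm P₀ μ j i j j)
      + (Fm P₀ μ j j i i + Fm P₀ μ j j i j + Fm P₀ μ j j j i + Fm P₀ μ j j j j)) := by
  conv_lhs => rw [Fm_inv P₀ μ hlinv ⟨rot i j, rot_mem i j hij⟩ i i i i]
  have key : ∀ R : OG d,
      ((rot i j : Matrix (Fin d) (Fin d) ℝ) * PM P₀ R * (rot i j)ᵀ) i i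
        * ((rot i j : Matrix (Fin d) (Fin d) ℝ) * PM P₀ R * (rot i j)ᵀ) i i
      = (1/4) * ((PM P₀ R i i * PM P₀ R i i + PM P₀ R i i * PM P₀ R i j
            + PM P₀ R i i * PM P₀ R j i + PM P₀ R i i * PM P₀ R j j)
        + (PM P₀ R i j * PM P₀ R i i + PM P₀ R i j * PM P₀ R i j
            + PM P₀ R i j * PM P₀ R j i + PM P₀ R i j * PM P₀ R j j)
        + (PM P₀ R j i * PM P₀ R i i + PM P₀ R j i * PM P₀ R i j
            + PM P₀ R j i * PM P₀ R j i + PM P₀ R j i * PM P₀ R j j)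
        + (PM P₀ R j j * PM P₀ R i i + PM P₀ R j j * PM P₀ R i j
            + PM P₀ R j j * PM P₀ R j i + PM P₀ R j j * PM P₀ R j j)) := by
    intro R
    rw [rot_conj i j hij]
    have h2 : rv * rv = 1/2 := rv_sq
    linear_combination ((PM P₀ R i i + PM P₀ R i j + PM P₀ R j i + PM P₀ R j j)^2
      * (rv * rv + 1/2)) * h2
  simp only [key]
  rw [integral_const_mul]
  have gii : Integrable (fun R : OG d => PM P₀ R i i * PM P₀ R i i
      + PM P₀ R i i * PM P₀ R i j + PM P₀ R i i * PM P₀ R j i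
      + PM P₀ R i i * PM P₀ R j j) μ :=
    (((integrable_pm P₀ μ i i i i).add (integrable_pm P₀ μ i i i j)).add
      (integrable_pm P₀ μ i i j i)).add (integrable_pm P₀ μ i i j j)
  have gij : Integrable (fun R : OG d => PM P₀ R i j * PM P₀ R i i
      + PM P₀ R i j * PM P₀ R i j + PM P₀ R i j * PM P₀ R j i
      + PM P₀ R i j * PM P₀ R j j) μ :=
    (((integrable_pm P₀ μ i j i i).add (integrable_pm P₀ μ i j i j)).add
      (integrable_pm P₀ μ i j j i)).add (integrable_pm P₀ μ i j j j)
  have gji : Integrable (fun R : OG d => PM P₀ R j i * PM P₀ R i i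
      + PM P₀ R j i * PM P₀ R i j + PM P₀ R j i * PM P₀ R j i
      + PM P₀ R j i * PM P₀ R j j) μ :=
    (((integrable_pm P₀ μ j i i i).add (integrable_pm P₀ μ j i i j)).add
      (integrable_pm P₀ μ j i j i)).add (integrable_pm P₀ μ j i j j)
  have gjj : Integrable (fun R : OG d => PM P₀ R j j * PM P₀ R i i
      + PM P₀ R j j * PM P₀ R i j + PM P₀ R j j * PM P₀ R j i
      + PM P₀ R j j * PM P₀ R j j) μ :=
    (((integrable_pm P₀ μ j j i i).add (integrable_pm P₀ μ j j i j)).add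
      (integrable_pm P₀ μ j j j i)).add (integrable_pm P₀ μ j j j j)
  have hTT : (∫ R, ((PM P₀ R i i * PM P₀ R i i + PM P₀ R i i * PM P₀ R i j + PM P₀ R i i * PM P₀ R j i + PM P₀ R i i * PM P₀ R j j)
        + (PM P₀ R i j * PM P₀ R i i + PM P₀ R i j * PM P₀ R i j + PM P₀ R i j * PM P₀ R j i + PM P₀ R i j * PM P₀ R j j)
        + (PM P₀ R j i * PM P₀ R i i + PM P₀ R j i * PM P₀ R i j + PM P₀ R j i * PM P₀ R j i + PM P₀ R j i * PM P₀ R j j)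
        + (PM P₀ R j j * PM P₀ R i i + PM P₀ R j j * PM P₀ R i j + PM P₀ R j j * PM P₀ R j i + PM P₀ R j j * PM P₀ R j j)) ∂μ)
      = ((Fm P₀ μ i i i i + Fm P₀ μ i i i j + Fm P₀ μ i i j i + Fm P₀ μ i i j j)
        + (Fm P₀ μ i j i i + Fm P₀ μ i j i j + Fm P₀ μ i j j i + Fm P₀ μ i j j j)
        + (Fm P₀ μ j i i i + Fm P₀ μ j i i j + Fm P₀ μ j i j i + Fm P₀ μ j i j j)
        + (Fm P₀ μ j j i i + Fm P₀ μ j j i j + Fm P₀ μ j j j i + Fm P₀ μ j j j j)) := by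
    rw [int_add4 μ _ _ _ _ gii gij gji gjj]
    rw [int_add4 μ _ _ _ _ (integrable_pm P₀ μ i i i i) (integrable_pm P₀ μ i i i j)
      (integrable_pm P₀ μ i i j i) (integrable_pm P₀ μ i i j j)]
    rw [int_add4 μ _ _ _ _ (integrable_pm P₀ μ i j i i) (integrable_pm P₀ μ i j i j)
      (integrable_pm P₀ μ i j j i) (integrable_pm P₀ μ i j j j)]
    rw [int_add4 μ _ _ _ _ (integrable_pm P₀ μ j i i i) (integrable_pm P₀ μ j i i j)
      (integrable_pm P₀ μ j i j i) (integrable_pm P₀ μ j i j j)]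
    rw [int_add4 μ _ _ _ _ (integrable_pm P₀ μ j j i i) (integrable_pm P₀ μ j j i j)
      (integrable_pm P₀ μ j j j i) (integrable_pm P₀ μ j j j j)]
    rfl
  rw [hTT]
end Stmt17
/-- Let `0 < n < d`, let `P₀` be a fixed orthogonal projection of rank `n`
(symmetric, idempotent, trace `n`), let `R` be Haar-distributed on the orthogonal group `O(d)`
(`μ` a probability measure invariant under left and right translation), and set `P = R P₀ Rᵀ`.
Then `E[P_{ab} P_{ce}] = β (δ_{ab} δ_{ce} + δ_{ac} δ_{be} + δ_{ae} δ_{bc})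
+ (n(n−1)/(d(d−1))) δ_{ab} δ_{ce}` with `β = n(d−n)/(d(d−1)(d+2))`. -/
theorem stmt17 (d n : ℕ) (hn : 0 < n) (hnd : n < d)
    (P₀ : Matrix (Fin d) (Fin d) ℝ)
    (hsym : P₀ᵀ = P₀) (hidem : P₀ * P₀ = P₀) (htr : P₀.trace = (n : ℝ))
    (μ : Measure (Matrix.orthogonalGroup (Fin d) ℝ)) [IsProbabilityMeasure μ]
    (hlinv : ∀ g : Matrix.orthogonalGroup (Fin d) ℝ, μ.map (fun r => g * r) = μ)
    (hrinv : ∀ g : Matrix.orthogonalGroup (Fin d) ℝ, μ.map (fun r => r * g) = μ)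
    (a b c e : Fin d) :
    (∫ R : Matrix.orthogonalGroup (Fin d) ℝ,
        (((R : Matrix (Fin d) (Fin d) ℝ) * P₀ * (R : Matrix (Fin d) (Fin d) ℝ)ᵀ) a b) *
        (((R : Matrix (Fin d) (Fin d) ℝ) * P₀ * (R : Matrix (Fin d) (Fin d) ℝ)ᵀ) c e) ∂μ)
      = ((n : ℝ) * ((d : ℝ) - n) / ((d : ℝ) * ((d : ℝ) - 1) * ((d : ℝ) + 2))) *
          ((if a = b then (1:ℝ) else 0) * (if c = e then (1:ℝ) else 0)
            + (if a = c then (1:ℝ) else 0) * (if b = e then (1:ℝ) else 0)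
            + (if a = e then (1:ℝ) else 0) * (if b = c then (1:ℝ) else 0))
        + ((n : ℝ) * ((n : ℝ) - 1) / ((d : ℝ) * ((d : ℝ) - 1))) *
            ((if a = b then (1:ℝ) else 0) * (if c = e then (1:ℝ) else 0)) := by
  classical
  have hd2 : 2 ≤ d := by omega
  set I : Fin d := ⟨0, by omega⟩ with hIdef
  set J : Fin d := ⟨1, by omega⟩ with hJdef
  have hIJ : I ≠ J := by simp [hIdef, hJdef, Fin.ext_iff]
  -- pattern lemmas
  have hpatA : ∀ x : Fin d, Stmt17.Fm P₀ μ x x x x = Stmt17.Fm P₀ μ I I I I := by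
    intro x
    have h := Stmt17.Fm_perm P₀ μ hlinv (Equiv.swap I x) I I I I
    rw [Equiv.swap_apply_left] at h
    exact h
  have hpatB : ∀ x y : Fin d, x ≠ y →
      Stmt17.Fm P₀ μ x x y y = Stmt17.Fm P₀ μ I I J J := by
    intro x y hxy
    obtain ⟨σ, h1, h2⟩ := Stmt17.exists_perm I J x y hIJ hxy
    have h := Stmt17.Fm_perm P₀ μ hlinv σ I I J J
    rw [h1, h2] at h
    exact h
  have hpatC : ∀ x y : Fin d, x ≠ y →
      Stmt17.Fm P₀ μ x y x y = Stmt17.Fm P₀ μ I J I J := by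
    intro x y hxy
    obtain ⟨σ, h1, h2⟩ := Stmt17.exists_perm I J x y hIJ hxy
    have h := Stmt17.Fm_perm P₀ μ hlinv σ I J I J
    rw [h1, h2] at h
    exact h
  have hpatC' : ∀ x y : Fin d, x ≠ y →
      Stmt17.Fm P₀ μ x y y x = Stmt17.Fm P₀ μ I J I J := by
    intro x y hxy
    rw [Stmt17.Fm_swap2 P₀ μ hsym]
    exact hpatC x y hxy
  -- equations
  have eq1 : (d:ℝ) * Stmt17.Fm P₀ μ I I I I
      + (d:ℝ) * ((d:ℝ)-1) * Stmt17.Fm P₀ μ I I J J = (n:ℝ) * (n:ℝ) := by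
    have hinner : ∀ x : Fin d, (∑ y : Fin d, Stmt17.Fm P₀ μ x x y y)
        = Stmt17.Fm P₀ μ I I I I + ((d:ℝ)-1) * Stmt17.Fm P₀ μ I I J J := by
      intro x
      have hterm : ∀ y : Fin d, Stmt17.Fm P₀ μ x x y y
          = Stmt17.Fm P₀ μ I I J J
            + (if y = x then Stmt17.Fm P₀ μ I I I I - Stmt17.Fm P₀ μ I I J J else 0) := by
        intro y
        by_cases h : y = x
        · rw [if_pos h, h, hpatA x]; ring
        · rw [if_neg h, hpatB x y (fun hh => h hh.symm)]; ring
      rw [Finset.sum_congr rfl fun y _ => hterm y, Finset.sum_add_distrib, Finset.sum_const,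
        Finset.sum_ite_eq' Finset.univ x]
      simp [Finset.card_univ]
      ring
    have hQ : (∑ x : Fin d, ∑ y : Fin d, Stmt17.Fm P₀ μ x x y y)
        = (d:ℝ) * (Stmt17.Fm P₀ μ I I I I + ((d:ℝ)-1) * Stmt17.Fm P₀ μ I I J J) := by
      rw [Finset.sum_congr rfl fun x _ => hinner x, Finset.sum_const, Finset.card_univ,
        Fintype.card_fin, nsmul_eq_mul]
    have h := Stmt17.sum1 P₀ μ htr
    rw [hQ] at h
    linear_combination h
  have eq2 : (d:ℝ) * Stmt17.Fm P₀ μ I I I I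
      + (d:ℝ) * ((d:ℝ)-1) * Stmt17.Fm P₀ μ I J I J = (n:ℝ) := by
    have hinner : ∀ x : Fin d, (∑ y : Fin d, Stmt17.Fm P₀ μ x y y x)
        = Stmt17.Fm P₀ μ I I I I + ((d:ℝ)-1) * Stmt17.Fm P₀ μ I J I J := by
      intro x
      have hterm : ∀ y : Fin d, Stmt17.Fm P₀ μ x y y x
          = Stmt17.Fm P₀ μ I J I J
            + (if y = x then Stmt17.Fm P₀ μ I I I I - Stmt17.Fm P₀ μ I J I J else 0) := by
        intro y
        by_cases h : y = x
        · rw [if_pos h, h, hpatA x]; ring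
        · rw [if_neg h, hpatC' x y (fun hh => h hh.symm)]; ring
      rw [Finset.sum_congr rfl fun y _ => hterm y, Finset.sum_add_distrib, Finset.sum_const,
        Finset.sum_ite_eq' Finset.univ x]
      simp [Finset.card_univ]
      ring
    have hQ : (∑ x : Fin d, ∑ y : Fin d, Stmt17.Fm P₀ μ x y y x)
        = (d:ℝ) * (Stmt17.Fm P₀ μ I I I I + ((d:ℝ)-1) * Stmt17.Fm P₀ μ I J I J) := by
      rw [Finset.sum_congr rfl fun x _ => hinner x, Finset.sum_const, Finset.card_univ,
        Fintype.card_fin, nsmul_eq_mul]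
    have h := Stmt17.sum2 P₀ μ htr hidem
    rw [hQ] at h
    linear_combination h
  have eq3 : Stmt17.Fm P₀ μ I I I I
      = Stmt17.Fm P₀ μ I I J J + 2 * Stmt17.Fm P₀ μ I J I J := by
    have hrot := Stmt17.Fm_rot P₀ μ hlinv I J hIJ
    have z1 : Stmt17.Fm P₀ μ I I I J = 0 :=
      Stmt17.Fm_zero_e P₀ μ hlinv hsym I I I J (Ne.symm hIJ) (Ne.symm hIJ) (Ne.symm hIJ)
    have z2 : Stmt17.Fm P₀ μ I I J I = 0 :=
      Stmt17.Fm_zero_c P₀ μ hlinv I I J I (Ne.symm hIJ) (Ne.symm hIJ) (Ne.symm hIJ)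
    have z3 : Stmt17.Fm P₀ μ I J I I = 0 :=
      Stmt17.Fm_zero_b P₀ μ hlinv hsym I J I I (Ne.symm hIJ) (Ne.symm hIJ) (Ne.symm hIJ)
    have z4 : Stmt17.Fm P₀ μ J I I I = 0 :=
      Stmt17.Fm_zero_a P₀ μ hlinv J I I I (Ne.symm hIJ) (Ne.symm hIJ) (Ne.symm hIJ)
    have z5 : Stmt17.Fm P₀ μ I J J J = 0 :=
      Stmt17.Fm_zero_a P₀ μ hlinv I J J J hIJ hIJ hIJ
    have z6 : Stmt17.Fm P₀ μ J I J J = 0 :=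
      Stmt17.Fm_zero_b P₀ μ hlinv hsym J I J J hIJ hIJ hIJ
    have z7 : Stmt17.Fm P₀ μ J J I J = 0 :=
      Stmt17.Fm_zero_c P₀ μ hlinv J J I J hIJ hIJ hIJ
    have z8 : Stmt17.Fm P₀ μ J J J I = 0 :=
      Stmt17.Fm_zero_e P₀ μ hlinv hsym J J J I hIJ hIJ hIJ
    have p1 : Stmt17.Fm P₀ μ J J J J = Stmt17.Fm P₀ μ I I I I := hpatA J
    have p2 : Stmt17.Fm P₀ μ J J I I = Stmt17.Fm P₀ μ I I J J := hpatB J I (Ne.symm hIJ)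
    have p3 : Stmt17.Fm P₀ μ I J J I = Stmt17.Fm P₀ μ I J I J := hpatC' I J hIJ
    have p4 : Stmt17.Fm P₀ μ J I J I = Stmt17.Fm P₀ μ I J I J := hpatC J I (Ne.symm hIJ)
    have p5 : Stmt17.Fm P₀ μ J I I J = Stmt17.Fm P₀ μ I J I J := hpatC' J I (Ne.symm hIJ)
    rw [z1, z2, z3, z4, z5, z6, z7, z8, p1, p2, p3, p4, p5] at hrot
    linarith
  -- solve the linear system
  have hD2 : (2:ℝ) ≤ (d:ℝ) := by exact_mod_cast hd2
  have hd0 : (0:ℝ) < (d:ℝ) := by linarith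
  have hd1 : (0:ℝ) < (d:ℝ) - 1 := by linarith
  have hd3 : (0:ℝ) < (d:ℝ) + 2 := by linarith
  have hden1 : (d:ℝ) * ((d:ℝ)-1) * ((d:ℝ)+2) ≠ 0 :=
    ne_of_gt (mul_pos (mul_pos hd0 hd1) hd3)
  have hden2 : (d:ℝ) * ((d:ℝ)-1) ≠ 0 := ne_of_gt (mul_pos hd0 hd1)
  have hCv : Stmt17.Fm P₀ μ I J I J
      = (n:ℝ) * ((d:ℝ) - (n:ℝ)) / ((d:ℝ) * ((d:ℝ)-1) * ((d:ℝ)+2)) := by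
    rw [eq_div_iff hden1]
    linear_combination (-1:ℝ) * eq1 + (d:ℝ) * eq2 - ((d:ℝ) * ((d:ℝ)-1)) * eq3
  have hBCv : Stmt17.Fm P₀ μ I I J J - Stmt17.Fm P₀ μ I J I J
      = (n:ℝ) * ((n:ℝ)-1) / ((d:ℝ) * ((d:ℝ)-1)) := by
    rw [eq_div_iff hden2]
    linear_combination eq1 - eq2
  -- case analysis
  show Stmt17.Fm P₀ μ a b c e = _
  by_cases hab : a = b
  · by_cases hce : c = e
    · by_cases hac : a = c
      · rw [← hab, ← hce, ← hac, hpatA a]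
        simp only [eq_self_iff_true, if_true]
        linear_combination eq3 + hBCv + 3 * hCv
      · rw [← hab, ← hce, hpatB a c hac]
        simp [hac]
        linear_combination hBCv + hCv
    · rw [← hab]
      by_cases hca : c = a
      · have hne : e ≠ a := fun h => hce (by rw [hca, h])
        rw [hca, Stmt17.Fm_zero_e P₀ μ hlinv hsym a a a e hne hne hne]
        simp [show ¬ a = e from fun h => hne h.symm]
      · rw [Stmt17.Fm_zero_c P₀ μ hlinv a a c e hce hca hca]
        simp [hce, show ¬ a = c from fun h => hca h.symm]
  · by_cases hac : a = c
    · by_cases hbe : b = e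
      · rw [← hac, ← hbe, hpatC a b hab]
        simp [hab, show ¬ b = a from fun h => hab h.symm]
        linear_combination hCv
      · rw [← hac, Stmt17.Fm_zero_b P₀ μ hlinv hsym a b a e (Ne.symm hab) (Ne.symm hab) hbe]
        simp [hab, hbe, show ¬ b = a from fun h => hab h.symm]
    · by_cases hae : a = e
      · by_cases hbc : b = c
        · rw [← hae, ← hbc, hpatC' a b hab]
          simp [hab, show ¬ b = a from fun h => hab h.symm]
          linear_combination hCv
        · rw [← hae, Stmt17.Fm_zero_b P₀ μ hlinv hsym a b c a (Ne.symm hab) hbc (Ne.symm hab)]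
          simp [hab, hac, hbc, show ¬ c = a from fun h => hac h.symm,
            show ¬ b = a from fun h => hab h.symm]
      · rw [Stmt17.Fm_zero_a P₀ μ hlinv a b c e hab hac hae]
        simp [hab, hac, hae]
end
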